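/- Suppose the primal and dual condition numbers δ_P and δ_D of the LP are both positive, let (x*, u*) be a primal–dual optimal pair with C_* := max(‖x* − x̄‖, ‖u* − ū‖), and suppose β ≥ 10 C_* / (‖d‖ min(δ_P, δ_D)). Then, with b_β := A x(β) and c_β := c + (1/β)(x(β) − x̄), the optimal value of the perturbed LP min c_β^T x subject to Ax = b_β, x ≥ 0 (which is attained at x(β)) satisfies |c^T x* − c_β^T x(β)| ≤ (1/β) · 25 C_* / (2 δ_P δ_D). -/

import Mathlib

open Matrix Finset MeasureTheory ProbabilityTheory

/-- Euclidean norm of a finitely-indexed real vector. -/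
noncomputable def l2norm {ι : Type*} [Fintype ι] (x : ι → ℝ) : ℝ :=
  Real.sqrt (∑ i, (x i) ^ 2)

/-- Frobenius norm of a real matrix. -/
noncomputable def frobNorm {ι κ : Type*} [Fintype ι] [Fintype κ] (A : Matrix ι κ ℝ) : ℝ :=
  Real.sqrt (∑ i, ∑ j, (A i j) ^ 2)

/-- Euclidean inner product. -/
noncomputable def rdot {ι : Type*} [Fintype ι] (a b : ι → ℝ) : ℝ := ∑ i, a i * b i

/-- The regularized quadratic penalty objective
`f_β(x) = cᵀx − ūᵀ(Ax−b) + (β/2)‖Ax−b‖² + (1/(2β))‖x−x̄‖²`. -/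
noncomputable def fpen {ι κ : Type*} [Fintype ι] [Fintype κ]
    (A : Matrix ι κ ℝ) (b : ι → ℝ) (c : κ → ℝ) (ub : ι → ℝ) (xb : κ → ℝ)
    (β : ℝ) (x : κ → ℝ) : ℝ :=
  rdot c x - rdot ub (A.mulVec x - b) + (β / 2) * l2norm (A.mulVec x - b) ^ 2
    + (1 / (2 * β)) * l2norm (x - xb) ^ 2

/-- Feasibility of the standard-form primal LP `Ax = b, x ≥ 0`. -/
def PrimalFeasible {ι κ : Type*} [Fintype ι] [Fintype κ]
    (A : Matrix ι κ ℝ) (b : ι → ℝ) : Prop :=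
  ∃ x : κ → ℝ, (∀ j, 0 ≤ x j) ∧ A.mulVec x = b

/-- Feasibility of the dual LP `Aᵀu ≤ c`. -/
def DualFeasible {ι κ : Type*} [Fintype ι] [Fintype κ]
    (A : Matrix ι κ ℝ) (c : κ → ℝ) : Prop :=
  ∃ u : ι → ℝ, ∀ j, Aᵀ.mulVec u j ≤ c j

/-- Norm of the data `d = (A, b, c)`: `max(‖A‖_F, ‖b‖₂, ‖c‖₂)`. -/
noncomputable def dnorm {ι κ : Type*} [Fintype ι] [Fintype κ]
    (A : Matrix ι κ ℝ) (b : ι → ℝ) (c : κ → ℝ) : ℝ :=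
  max (frobNorm A) (max (l2norm b) (l2norm c))

/-- Distance of the data to primal infeasibility. -/
noncomputable def distPri {ι κ : Type*} [Fintype ι] [Fintype κ]
    (A : Matrix ι κ ℝ) (b : ι → ℝ) (c : κ → ℝ) : ℝ :=
  sInf { r : ℝ | ∃ (dA : Matrix ι κ ℝ) (db : ι → ℝ) (dc : κ → ℝ),
    ¬ PrimalFeasible (A + dA) (b + db) ∧ r = dnorm dA db dc }

/-- Distance of the data to dual infeasibility. -/
noncomputable def distDual {ι κ : Type*} [Fintype ι] [Fintype κ]
    (A : Matrix ι κ ℝ) (b : ι → ℝ) (c : κ → ℝ) : ℝ :=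
  sInf { r : ℝ | ∃ (dA : Matrix ι κ ℝ) (db : ι → ℝ) (dc : κ → ℝ),
    ¬ DualFeasible (A + dA) (c + dc) ∧ r = dnorm dA db dc }

/-- Renegar primal condition number `δ_P`. -/
noncomputable def deltaP {ι κ : Type*} [Fintype ι] [Fintype κ]
    (A : Matrix ι κ ℝ) (b : ι → ℝ) (c : κ → ℝ) : ℝ := distPri A b c / dnorm A b c

/-- Renegar dual condition number `δ_D`. -/
noncomputable def deltaD {ι κ : Type*} [Fintype ι] [Fintype κ]
    (A : Matrix ι κ ℝ) (b : ι → ℝ) (c : κ → ℝ) : ℝ := distDual A b c / dnorm A b c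

section Basics
variable {ι κ : Type*} [Fintype ι] [Fintype κ]

lemma rdot_comm (a b : ι → ℝ) : rdot a b = rdot b a := by
  simp [rdot, mul_comm]

lemma rdot_nonneg {a b : ι → ℝ} (ha : ∀ i, 0 ≤ a i) (hb : ∀ i, 0 ≤ b i) : 0 ≤ rdot a b :=
  Finset.sum_nonneg fun i _ => mul_nonneg (ha i) (hb i)

lemma rdot_self_nonneg (a : ι → ℝ) : 0 ≤ rdot a a :=
  Finset.sum_nonneg fun i _ => mul_self_nonneg _

lemma rdot_add_left (a b c : ι → ℝ) : rdot (a + b) c = rdot a c + rdot b c := by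
  simp [rdot, add_mul, Finset.sum_add_distrib]

lemma rdot_add_right (a b c : ι → ℝ) : rdot a (b + c) = rdot a b + rdot a c := by
  simp [rdot, mul_add, Finset.sum_add_distrib]

lemma rdot_sub_left (a b c : ι → ℝ) : rdot (a - b) c = rdot a c - rdot b c := by
  simp [rdot, sub_mul, Finset.sum_sub_distrib]

lemma rdot_sub_right (a b c : ι → ℝ) : rdot a (b - c) = rdot a b - rdot a c := by
  simp [rdot, mul_sub, Finset.sum_sub_distrib]

lemma rdot_smul_left (t : ℝ) (a b : ι → ℝ) : rdot (t • a) b = t * rdot a b := by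
  simp [rdot, Finset.mul_sum, mul_assoc]

lemma rdot_smul_right (t : ℝ) (a b : ι → ℝ) : rdot a (t • b) = t * rdot a b := by
  simp [rdot, Finset.mul_sum]; apply Finset.sum_congr rfl; intros; ring

lemma rdot_zero_left (a : ι → ℝ) : rdot 0 a = 0 := by simp [rdot]

lemma rdot_zero_right (a : ι → ℝ) : rdot a 0 = 0 := by simp [rdot]

lemma rdot_neg_left (a b : ι → ℝ) : rdot (-a) b = - rdot a b := by
  simp [rdot, Finset.sum_neg_distrib]

lemma l2norm_nonneg (x : ι → ℝ) : 0 ≤ l2norm x := Real.sqrt_nonneg _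

lemma l2norm_sq (x : ι → ℝ) : l2norm x ^ 2 = rdot x x := by
  rw [l2norm, Real.sq_sqrt (Finset.sum_nonneg fun i _ => sq_nonneg _)]
  simp [rdot, sq]

lemma l2norm_eq_sqrt_rdot (x : ι → ℝ) : l2norm x = Real.sqrt (rdot x x) := by
  rw [l2norm]; congr 1; simp [rdot, sq]

lemma l2norm_le_of_sq_le {x : ι → ℝ} {t : ℝ} (ht : 0 ≤ t) (h : rdot x x ≤ t ^ 2) :
    l2norm x ≤ t := by
  rw [l2norm_eq_sqrt_rdot]
  calc Real.sqrt (rdot x x) ≤ Real.sqrt (t ^ 2) := Real.sqrt_le_sqrt h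
    _ = t := by rw [Real.sqrt_sq ht]

lemma rdot_le_l2 (a b : ι → ℝ) : rdot a b ≤ l2norm a * l2norm b := by
  have h := sum_mul_sq_le_sq_mul_sq Finset.univ a b
  have h2 : (rdot a b) ^ 2 ≤ (l2norm a * l2norm b) ^ 2 := by
    rw [mul_pow, l2norm_sq, l2norm_sq]
    calc (rdot a b)^2 ≤ (∑ i, a i ^2) * ∑ i, b i ^2 := h
      _ = rdot a a * rdot b b := by simp [rdot, sq]
  have hnn : 0 ≤ l2norm a * l2norm b := mul_nonneg (l2norm_nonneg a) (l2norm_nonneg b)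
  nlinarith [h2, hnn]

lemma l2norm_neg (a : ι → ℝ) : l2norm (-a) = l2norm a := by
  simp [l2norm]

lemma abs_rdot_le_l2 (a b : ι → ℝ) : |rdot a b| ≤ l2norm a * l2norm b := by
  rw [abs_le]
  constructor
  · have := rdot_le_l2 (-a) b
    rw [rdot_neg_left, l2norm_neg] at this
    linarith
  · exact rdot_le_l2 a b

lemma neg_rdot_le_l2 (a b : ι → ℝ) : - (l2norm a * l2norm b) ≤ rdot a b :=
  (abs_le.mp (abs_rdot_le_l2 a b)).1

lemma l2norm_smul (t : ℝ) (x : ι → ℝ) : l2norm (t • x) = |t| * l2norm x := by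
  rw [l2norm, l2norm]
  have : ∀ i, (t • x) i ^ 2 = t^2 * x i ^2 := fun i => by simp [mul_pow]
  simp_rw [this, ← Finset.mul_sum]
  rw [Real.sqrt_mul (sq_nonneg t), Real.sqrt_sq_eq_abs]

lemma l2norm_add_le (x y : ι → ℝ) : l2norm (x + y) ≤ l2norm x + l2norm y := by
  apply l2norm_le_of_sq_le (add_nonneg (l2norm_nonneg x) (l2norm_nonneg y))
  have h : rdot (x+y) (x+y) = rdot x x + 2 * rdot x y + rdot y y := by
    rw [rdot_add_left, rdot_add_right, rdot_add_right, rdot_comm y x]; ring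
  rw [h]
  have hxy := rdot_le_l2 x y
  have hx := l2norm_sq x
  have hy := l2norm_sq y
  nlinarith [l2norm_nonneg x, l2norm_nonneg y]

lemma coord_abs_le_l2norm (x : ι → ℝ) (j : ι) : |x j| ≤ l2norm x := by
  rw [l2norm]
  have : x j ^2 ≤ ∑ i, x i ^2 :=
    Finset.single_le_sum (f := fun i => x i ^2) (fun i _ => sq_nonneg _) (Finset.mem_univ j)
  calc |x j| = Real.sqrt (x j ^ 2) := by rw [Real.sqrt_sq_eq_abs]
    _ ≤ _ := Real.sqrt_le_sqrt this

lemma frob_nonneg (A : Matrix ι κ ℝ) : 0 ≤ frobNorm A := Real.sqrt_nonneg _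

lemma frob_rank_one (u : ι → ℝ) (v : κ → ℝ) :
    frobNorm (Matrix.of fun i j => u i * v j) = l2norm u * l2norm v := by
  rw [frobNorm, l2norm, l2norm, ← Real.sqrt_mul (Finset.sum_nonneg fun i _ => sq_nonneg _)]
  congr 1
  have h : ∀ i : ι, ∑ j, ((Matrix.of fun i j => u i * v j) i j) ^ 2 = u i ^ 2 * ∑ j, v j ^ 2 := by
    intro i
    simp [Matrix.of_apply, mul_pow, Finset.mul_sum]
  simp_rw [h]
  rw [← Finset.sum_mul]
end Basics

section LP
variable {ι κ : Type*} [Fintype ι] [Fintype κ]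

lemma l2norm_zero : l2norm (0 : ι → ℝ) = 0 := by simp [l2norm]

lemma frob_zero : frobNorm (0 : Matrix ι κ ℝ) = 0 := by simp [frobNorm]

lemma frob_neg (A : Matrix ι κ ℝ) : frobNorm (-A) = frobNorm A := by simp [frobNorm]

lemma l2norm_single [DecidableEq ι] (j : ι) (t : ℝ) : l2norm (Pi.single j t) = |t| := by
  rw [l2norm]
  have h : ∑ i, (Pi.single j t i) ^ 2 = t ^ 2 := by
    rw [Finset.sum_eq_single j]
    · simp
    · intro i _ hij; simp [Pi.single_eq_of_ne hij]
    · intro h; exact absurd (Finset.mem_univ j) h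
  rw [h, Real.sqrt_sq_eq_abs]

lemma dnorm_nonneg (A : Matrix ι κ ℝ) (b : ι → ℝ) (c : κ → ℝ) : 0 ≤ dnorm A b c :=
  le_trans (frob_nonneg A) (le_max_left _ _)

lemma frob_le_dnorm (A : Matrix ι κ ℝ) (b : ι → ℝ) (c : κ → ℝ) : frobNorm A ≤ dnorm A b c :=
  le_max_left _ _

lemma l2b_le_dnorm (A : Matrix ι κ ℝ) (b : ι → ℝ) (c : κ → ℝ) : l2norm b ≤ dnorm A b c :=
  le_trans (le_max_left _ _) (le_max_right _ _)

lemma l2c_le_dnorm (A : Matrix ι κ ℝ) (b : ι → ℝ) (c : κ → ℝ) : l2norm c ≤ dnorm A b c :=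
  le_trans (le_max_right _ _) (le_max_right _ _)

lemma rdot_tmul (A : Matrix ι κ ℝ) (u : ι → ℝ) (x : κ → ℝ) :
    rdot (Aᵀ.mulVec u) x = rdot u (A.mulVec x) := by
  simp only [rdot, Matrix.mulVec, dotProduct, Matrix.transpose_apply,
    Finset.sum_mul, Finset.mul_sum]
  rw [Finset.sum_comm]
  apply Finset.sum_congr rfl; intro i _
  apply Finset.sum_congr rfl; intro j _
  ring

lemma not_primalFeasible_of_cert {A : Matrix ι κ ℝ} {b : ι → ℝ} (y : ι → ℝ)
    (hy : ∀ j, Aᵀ.mulVec y j ≤ 0) (hby : 0 < rdot b y) : ¬ PrimalFeasible A b := by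
  rintro ⟨x, hx, hAx⟩
  have h1 : rdot (Aᵀ.mulVec y) x ≤ 0 :=
    Finset.sum_nonpos fun j _ => mul_nonpos_iff.mpr (Or.inr ⟨hy j, hx j⟩)
  rw [rdot_tmul, hAx, rdot_comm] at h1
  linarith

lemma not_dualFeasible_of_cert {A : Matrix ι κ ℝ} {c : κ → ℝ} (x : κ → ℝ)
    (hx : ∀ j, 0 ≤ x j) (hAx : A.mulVec x = 0) (hcx : rdot c x < 0) :
    ¬ DualFeasible A c := by
  rintro ⟨u, hu⟩
  have h1 : rdot (Aᵀ.mulVec u) x ≤ rdot c x :=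
    Finset.sum_le_sum fun j _ => mul_le_mul_of_nonneg_right (hu j) (hx j)
  rw [rdot_tmul, hAx, rdot_zero_right] at h1
  linarith

lemma priSet_bddBelow (A : Matrix ι κ ℝ) (b : ι → ℝ) (c : κ → ℝ) :
    BddBelow { r : ℝ | ∃ (dA : Matrix ι κ ℝ) (db : ι → ℝ) (dc : κ → ℝ),
      ¬ PrimalFeasible (A + dA) (b + db) ∧ r = dnorm dA db dc } := by
  refine ⟨0, ?_⟩
  rintro r ⟨dA, db, dc, _, rfl⟩
  exact dnorm_nonneg _ _ _

lemma dualSet_bddBelow (A : Matrix ι κ ℝ) (b : ι → ℝ) (c : κ → ℝ) :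
    BddBelow { r : ℝ | ∃ (dA : Matrix ι κ ℝ) (db : ι → ℝ) (dc : κ → ℝ),
      ¬ DualFeasible (A + dA) (c + dc) ∧ r = dnorm dA db dc } := by
  refine ⟨0, ?_⟩
  rintro r ⟨dA, db, dc, _, rfl⟩
  exact dnorm_nonneg _ _ _

lemma distPri_nonneg (A : Matrix ι κ ℝ) (b : ι → ℝ) (c : κ → ℝ) : 0 ≤ distPri A b c :=
  Real.sInf_nonneg (by rintro r ⟨dA, db, dc, _, rfl⟩; exact dnorm_nonneg _ _ _)

lemma distDual_nonneg (A : Matrix ι κ ℝ) (b : ι → ℝ) (c : κ → ℝ) : 0 ≤ distDual A b c :=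
  Real.sInf_nonneg (by rintro r ⟨dA, db, dc, _, rfl⟩; exact dnorm_nonneg _ _ _)

lemma distPri_le_of_infeasible {A : Matrix ι κ ℝ} {b : ι → ℝ} (c : κ → ℝ)
    (dA : Matrix ι κ ℝ) (db : ι → ℝ) (h : ¬ PrimalFeasible (A + dA) (b + db)) :
    distPri A b c ≤ max (frobNorm dA) (l2norm db) := by
  have hmem : dnorm dA db (0 : κ → ℝ) ∈ { r : ℝ | ∃ (dA' : Matrix ι κ ℝ) (db' : ι → ℝ)
      (dc' : κ → ℝ), ¬ PrimalFeasible (A + dA') (b + db') ∧ r = dnorm dA' db' dc' } :=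
    ⟨dA, db, 0, h, rfl⟩
  have h2 := csInf_le (priSet_bddBelow A b c) hmem
  rw [dnorm, l2norm_zero, max_eq_left (l2norm_nonneg db)] at h2
  exact h2

lemma distDual_le_of_infeasible {A : Matrix ι κ ℝ} {c : κ → ℝ} (b : ι → ℝ)
    (dA : Matrix ι κ ℝ) (dc : κ → ℝ) (h : ¬ DualFeasible (A + dA) (c + dc)) :
    distDual A b c ≤ max (frobNorm dA) (l2norm dc) := by
  have hmem : dnorm dA (0 : ι → ℝ) dc ∈ { r : ℝ | ∃ (dA' : Matrix ι κ ℝ) (db' : ι → ℝ)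
      (dc' : κ → ℝ), ¬ DualFeasible (A + dA') (c + dc') ∧ r = dnorm dA' db' dc' } :=
    ⟨dA, 0, dc, h, rfl⟩
  have h2 := csInf_le (dualSet_bddBelow A b c) hmem
  rw [dnorm, l2norm_zero, max_eq_right (l2norm_nonneg dc)] at h2
  exact h2

lemma primalFeasible_of_pos {A : Matrix ι κ ℝ} {b : ι → ℝ} {c : κ → ℝ}
    (h : 0 < distPri A b c) : PrimalFeasible A b := by
  by_contra hn
  have h2 := distPri_le_of_infeasible c (0 : Matrix ι κ ℝ) (0 : ι → ℝ)
    (by simpa using hn)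
  rw [frob_zero, l2norm_zero] at h2
  simp at h2
  linarith

lemma dualFeasible_of_pos {A : Matrix ι κ ℝ} {b : ι → ℝ} {c : κ → ℝ}
    (h : 0 < distDual A b c) : DualFeasible A c := by
  by_contra hn
  have h2 := distDual_le_of_infeasible b (0 : Matrix ι κ ℝ) (0 : κ → ℝ)
    (by simpa using hn)
  rw [frob_zero, l2norm_zero] at h2
  simp at h2
  linarith

lemma distPri_eq_zero_of_isEmpty [IsEmpty ι] (A : Matrix ι κ ℝ) (b : ι → ℝ) (c : κ → ℝ) :
    distPri A b c = 0 := by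
  have hfe : ∀ (A' : Matrix ι κ ℝ) (b' : ι → ℝ), PrimalFeasible A' b' := by
    intro A' b'
    exact ⟨0, fun j => le_refl 0, funext fun i => isEmptyElim i⟩
  have : { r : ℝ | ∃ (dA : Matrix ι κ ℝ) (db : ι → ℝ) (dc : κ → ℝ),
      ¬ PrimalFeasible (A + dA) (b + db) ∧ r = dnorm dA db dc } = ∅ := by
    ext r
    simp only [Set.mem_setOf_eq, Set.mem_empty_iff_false, iff_false]
    rintro ⟨dA, db, dc, hinf, _⟩
    exact hinf (hfe _ _)
  rw [distPri, this, Real.sInf_empty]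

lemma distDual_eq_zero_of_isEmpty [IsEmpty κ] (A : Matrix ι κ ℝ) (b : ι → ℝ) (c : κ → ℝ) :
    distDual A b c = 0 := by
  have hfe : ∀ (A' : Matrix ι κ ℝ) (c' : κ → ℝ), DualFeasible A' c' := by
    intro A' c'
    exact ⟨0, fun j => isEmptyElim j⟩
  have : { r : ℝ | ∃ (dA : Matrix ι κ ℝ) (db : ι → ℝ) (dc : κ → ℝ),
      ¬ DualFeasible (A + dA) (c + dc) ∧ r = dnorm dA db dc } = ∅ := by
    ext r
    simp only [Set.mem_setOf_eq, Set.mem_empty_iff_false, iff_false]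
    rintro ⟨dA, db, dc, hinf, _⟩
    exact hinf (hfe _ _)
  rw [distDual, this, Real.sInf_empty]

lemma priSet_nonempty [DecidableEq ι] (i0 : ι) (A : Matrix ι κ ℝ) (b : ι → ℝ) (c : κ → ℝ) :
    Set.Nonempty { r : ℝ | ∃ (dA : Matrix ι κ ℝ) (db : ι → ℝ) (dc : κ → ℝ),
      ¬ PrimalFeasible (A + dA) (b + db) ∧ r = dnorm dA db dc } := by
  refine ⟨_, ⟨-A, Pi.single i0 (|b i0| + 1), 0, ?_, rfl⟩⟩
  rintro ⟨x, _, hAx⟩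
  have h0 : A + (-A) = 0 := by abel
  rw [h0, Matrix.zero_mulVec] at hAx
  have := congrFun hAx i0
  simp only [Pi.zero_apply, Pi.add_apply, Pi.single_eq_same] at this
  have := abs_nonneg (b i0)
  rcases abs_cases (b i0) with ⟨h1, _⟩ | ⟨h1, _⟩ <;> linarith [congrFun hAx i0, this]

lemma dualSet_nonempty [DecidableEq κ] (j0 : κ) (A : Matrix ι κ ℝ) (b : ι → ℝ) (c : κ → ℝ) :
    Set.Nonempty { r : ℝ | ∃ (dA : Matrix ι κ ℝ) (db : ι → ℝ) (dc : κ → ℝ),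
      ¬ DualFeasible (A + dA) (c + dc) ∧ r = dnorm dA db dc } := by
  refine ⟨_, ⟨-A, 0, -c - Pi.single j0 1, ?_, rfl⟩⟩
  rintro ⟨u, hu⟩
  have h0 : A + (-A) = 0 := by abel
  have h1 := hu j0
  rw [h0] at h1
  have h2 : (0 : Matrix ι κ ℝ)ᵀ.mulVec u j0 = 0 := by
    simp [Matrix.mulVec, dotProduct]
  rw [h2] at h1
  simp only [Pi.add_apply, Pi.sub_apply, Pi.neg_apply, Pi.single_eq_same] at h1
  linarith

lemma distPri_lower [DecidableEq ι] (i0 : ι) (A : Matrix ι κ ℝ) (b c b' c') :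
    distPri A b c - l2norm (b' - b) ≤ distPri A b' c' := by
  apply le_csInf (priSet_nonempty i0 A b' c')
  rintro r ⟨dA, db, dc, hinf, rfl⟩
  have heq : b + (db + (b' - b)) = b' + db := by abel
  have h2 := distPri_le_of_infeasible c dA (db + (b' - b)) (by rw [heq]; exact hinf)
  have h3 := l2norm_add_le db (b' - b)
  have h4 : max (frobNorm dA) (l2norm (db + (b' - b)))
      ≤ dnorm dA db dc + l2norm (b' - b) := by
    apply max_le
    · exact le_trans (frob_le_dnorm dA db dc) (le_add_of_nonneg_right (l2norm_nonneg _))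
    · exact le_trans h3 (add_le_add_left (l2b_le_dnorm dA db dc) _)
  linarith

lemma distDual_lower [DecidableEq κ] (j0 : κ) (A : Matrix ι κ ℝ) (b c b' c') :
    distDual A b c - l2norm (c' - c) ≤ distDual A b' c' := by
  apply le_csInf (dualSet_nonempty j0 A b' c')
  rintro r ⟨dA, db, dc, hinf, rfl⟩
  have heq : c + (dc + (c' - c)) = c' + dc := by abel
  have h2 := distDual_le_of_infeasible b dA (dc + (c' - c)) (by rw [heq]; exact hinf)
  have h3 := l2norm_add_le dc (c' - c)
  have h4 : max (frobNorm dA) (l2norm (dc + (c' - c)))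
      ≤ dnorm dA db dc + l2norm (c' - c) := by
    apply max_le
    · exact le_trans (frob_le_dnorm dA db dc) (le_add_of_nonneg_right (l2norm_nonneg _))
    · exact le_trans h3 (add_le_add_left (l2c_le_dnorm dA db dc) _)
  linarith

lemma distPri_le_dnorm [DecidableEq ι] (i0 : ι) (A : Matrix ι κ ℝ) (b : ι → ℝ) (c : κ → ℝ) :
    distPri A b c ≤ dnorm A b c := by
  apply le_of_forall_pos_le_add
  intro ε hε
  have hinf : ¬ PrimalFeasible (A + (-A)) (b + Pi.single i0 (|b i0| + ε)) := by
    rintro ⟨x, _, hAx⟩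
    have h0 : A + (-A) = 0 := by abel
    rw [h0, Matrix.zero_mulVec] at hAx
    have := congrFun hAx i0
    simp only [Pi.zero_apply, Pi.add_apply, Pi.single_eq_same] at this
    rcases abs_cases (b i0) with ⟨h1, _⟩ | ⟨h1, _⟩ <;> linarith
  have h2 := distPri_le_of_infeasible c (-A) _ hinf
  rw [frob_neg, l2norm_single] at h2
  have hab : |(|b i0| + ε)| = |b i0| + ε := abs_of_pos (by positivity)
  rw [hab] at h2
  have h5 : |b i0| ≤ l2norm b := coord_abs_le_l2norm b i0
  have h6 : l2norm b ≤ dnorm A b c := l2b_le_dnorm A b c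
  have h7 : frobNorm A ≤ dnorm A b c := frob_le_dnorm A b c
  calc distPri A b c ≤ max (frobNorm A) (|b i0| + ε) := h2
    _ ≤ dnorm A b c + ε := max_le (by linarith) (by linarith)

lemma distDual_le_dnorm [DecidableEq κ] (j0 : κ) (A : Matrix ι κ ℝ) (b : ι → ℝ) (c : κ → ℝ) :
    distDual A b c ≤ dnorm A b c := by
  apply le_of_forall_pos_le_add
  intro ε hε
  have hinf : ¬ DualFeasible (A + (-A)) (c + (-Pi.single j0 (max (c j0) 0 + ε) )) := by
    rintro ⟨u, hu⟩
    have h0 : A + (-A) = 0 := by abel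
    have h1 := hu j0
    rw [h0] at h1
    have h2 : (0 : Matrix ι κ ℝ)ᵀ.mulVec u j0 = 0 := by
      simp [Matrix.mulVec, dotProduct]
    rw [h2] at h1
    simp only [Pi.add_apply, Pi.neg_apply, Pi.single_eq_same] at h1
    have := le_max_left (c j0) 0
    have := le_max_right (c j0) 0
    linarith
  have h2 := distDual_le_of_infeasible b (-A) _ hinf
  rw [frob_neg] at h2
  have hls : l2norm (-Pi.single j0 (max (c j0) 0 + ε)) = max (c j0) 0 + ε := by
    rw [l2norm_neg, l2norm_single, abs_of_pos]
    have := le_max_right (c j0) 0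
    linarith
  rw [hls] at h2
  have h5 : |c j0| ≤ l2norm c := coord_abs_le_l2norm c j0
  have h6 : l2norm c ≤ dnorm A b c := l2c_le_dnorm A b c
  have h7 : frobNorm A ≤ dnorm A b c := frob_le_dnorm A b c
  have h8 : max (c j0) 0 ≤ |c j0| := by
    rcases le_or_gt (c j0) 0 with h | h
    · rw [max_eq_right h]; exact abs_nonneg _
    · rw [max_eq_left h.le]; exact le_abs_self _
  calc distDual A b c ≤ max (frobNorm A) (max (c j0) 0 + ε) := h2
    _ ≤ dnorm A b c + ε := max_le (by linarith) (by linarith)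

end LP

section NormBounds
variable {ι κ : Type*} [Fintype ι] [Fintype κ]

lemma rankone_tmulVec (w y : ι → ℝ) (v : κ → ℝ) (j : κ) :
    ((Matrix.of fun i j => w i * v j)ᵀ.mulVec y) j = v j * rdot w y := by
  simp only [Matrix.mulVec, dotProduct, Matrix.transpose_apply, Matrix.of_apply, rdot]
  rw [Finset.mul_sum]
  apply Finset.sum_congr rfl; intros; ring

lemma rankone_mulVec (w : ι → ℝ) (v x : κ → ℝ) (i : ι) :
    ((Matrix.of fun i j => w i * v j).mulVec x) i = w i * rdot v x := by
  simp only [Matrix.mulVec, dotProduct, Matrix.of_apply, rdot]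
  rw [Finset.mul_sum]
  apply Finset.sum_congr rfl; intros; ring

/-- L1 : norm bound for dual feasible points with not-too-negative objective. -/
lemma dual_norm_bound (A : Matrix ι κ ℝ) (b : ι → ℝ) (c : κ → ℝ) (u : ι → ℝ)
    (hu : ∀ j, Aᵀ.mulVec u j ≤ c j) :
    distPri A b c * l2norm u ≤ max (l2norm c) (max 0 (- rdot b u)) := by
  rcases eq_or_lt_of_le (l2norm_nonneg u) with h0 | hU
  · rw [← h0, mul_zero]
    exact le_max_of_le_right (le_max_left 0 _)
  · set U := l2norm u with hUdef
    have hU2 : rdot u u = U ^ 2 := (l2norm_sq u).symm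
    have key : ∀ ε > 0, distPri A b c * U ≤ max (l2norm c) (max 0 (- rdot b u)) + ε := by
      intro ε hε
      set t := max 0 (ε - rdot b u) with ht
      set w : ι → ℝ := (-(1/U^2)) • u with hw
      set dA : Matrix ι κ ℝ := Matrix.of fun i j => w i * c j with hdA
      set db : ι → ℝ := (t/U^2) • u with hdb
      have hrwu : rdot w u = -1 := by
        rw [hw, rdot_smul_left, hU2]
        field_simp
      have hcert1 : ∀ j, (A + dA)ᵀ.mulVec u j ≤ 0 := by
        intro j
        rw [Matrix.transpose_add, Matrix.add_mulVec]
        have h2 : (dAᵀ.mulVec u) j = c j * rdot w u := rankone_tmulVec w u c j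
        rw [hrwu] at h2
        have := hu j
        simp only [Pi.add_apply]
        rw [h2]
        linarith
      have hcert2 : 0 < rdot (b + db) u := by
        rw [rdot_add_left, hdb, rdot_smul_left, hU2]
        have hUne : U ^ 2 ≠ 0 := by positivity
        rw [div_mul_cancel₀ _ hUne]
        rcases le_or_gt (ε - rdot b u) 0 with h | h
        · rw [ht, max_eq_left h]; linarith
        · rw [ht, max_eq_right h.le]; linarith
      have hinf := not_primalFeasible_of_cert u hcert1 hcert2
      have h2 := distPri_le_of_infeasible c dA db hinf
      have hfr : frobNorm dA = (1/U) * l2norm c := by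
        rw [hdA, frob_rank_one, hw, l2norm_smul]
        congr 1
        rw [abs_neg, abs_of_pos (by positivity)]
        field_simp
        ring
      have htnn : 0 ≤ t := le_max_left 0 _
      have hdbn : l2norm db = t / U := by
        rw [hdb, l2norm_smul, abs_of_nonneg (by positivity)]
        field_simp
        ring
      rw [hfr, hdbn] at h2
      have h3 : distPri A b c * U ≤ max ((1/U) * l2norm c) (t/U) * U :=
        mul_le_mul_of_nonneg_right h2 (le_of_lt hU)
      rw [max_mul_of_nonneg _ _ (le_of_lt hU)] at h3
      have hUne : U ≠ 0 := ne_of_gt hU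
      have e1 : (1/U) * l2norm c * U = l2norm c := by field_simp
      have e2 : t/U * U = t := by field_simp
      rw [e1, e2] at h3
      have h4 : t ≤ max 0 (- rdot b u) + ε := by
        rcases le_or_gt (ε - rdot b u) 0 with h | h
        · rw [ht, max_eq_left h]
          have := le_max_left (0:ℝ) (- rdot b u); linarith
        · rw [ht, max_eq_right h.le]
          have := le_max_right (0:ℝ) (- rdot b u); linarith
      calc distPri A b c * U ≤ max (l2norm c) t := h3
        _ ≤ max (l2norm c) (max 0 (- rdot b u) + ε) := max_le_max (le_refl _) h4
        _ ≤ max (l2norm c) (max 0 (- rdot b u)) + ε := by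
            apply max_le
            · have := le_max_left (l2norm c) (max 0 (- rdot b u)); linarith
            · have := le_max_right (l2norm c) (max 0 (- rdot b u)); linarith
    exact le_of_forall_pos_le_add key

/-- L2 : norm bound for primal feasible points with not-too-positive objective. -/
lemma primal_norm_bound (A : Matrix ι κ ℝ) (b : ι → ℝ) (c : κ → ℝ) (x : κ → ℝ)
    (hx : ∀ j, 0 ≤ x j) (hAx : A.mulVec x = b) :
    distDual A b c * l2norm x ≤ max (l2norm b) (max 0 (rdot c x)) := by
  rcases eq_or_lt_of_le (l2norm_nonneg x) with h0 | hX
  · rw [← h0, mul_zero]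
    exact le_max_of_le_right (le_max_left 0 _)
  · set X := l2norm x with hXdef
    have hX2 : rdot x x = X ^ 2 := (l2norm_sq x).symm
    have key : ∀ ε > 0, distDual A b c * X ≤ max (l2norm b) (max 0 (rdot c x)) + ε := by
      intro ε hε
      set t := max 0 (ε + rdot c x) with ht
      set w : ι → ℝ := (-(1/X^2)) • b with hw
      set dA : Matrix ι κ ℝ := Matrix.of fun i j => w i * x j with hdA
      set dc : κ → ℝ := (-(t/X^2)) • x with hdc
      have hcert1 : (A + dA).mulVec x = 0 := by
        funext i
        rw [Matrix.add_mulVec]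
        have h2 : (dA.mulVec x) i = w i * rdot x x := rankone_mulVec w x x i
        rw [hX2, hw] at h2
        simp only [Pi.add_apply, Pi.zero_apply, h2]
        have hXne : X ^ 2 ≠ 0 := by positivity
        have : (-(1/X^2)) • b i * X^2 = -b i := by rw [smul_eq_mul]; field_simp
        simp only [Pi.smul_apply, smul_eq_mul] at this ⊢
        rw [this, hAx]
        simp
      have hcert2 : rdot (c + dc) x < 0 := by
        rw [rdot_add_left, hdc, rdot_smul_left, hX2]
        have hXne : X ^ 2 ≠ 0 := by positivity
        have e : -(t/X^2) * X^2 = -t := by field_simp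
        rw [e]
        rcases le_or_gt (ε + rdot c x) 0 with h | h
        · rw [ht, max_eq_left h]; linarith
        · rw [ht, max_eq_right h.le]; linarith
      have hinf := not_dualFeasible_of_cert x hx hcert1 hcert2
      have h2 := distDual_le_of_infeasible b dA dc hinf
      have hfr : frobNorm dA = (1/X) * l2norm b := by
        rw [hdA, frob_rank_one, hw, l2norm_smul]
        rw [abs_neg, abs_of_pos (by positivity)]
        field_simp
        ring
      have htnn : 0 ≤ t := le_max_left 0 _
      have hdcn : l2norm dc = t / X := by
        rw [hdc, l2norm_smul, abs_neg, abs_of_nonneg (by positivity)]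
        field_simp
        ring
      rw [hfr, hdcn] at h2
      have h3 : distDual A b c * X ≤ max ((1/X) * l2norm b) (t/X) * X :=
        mul_le_mul_of_nonneg_right h2 (le_of_lt hX)
      rw [max_mul_of_nonneg _ _ (le_of_lt hX)] at h3
      have hXne : X ≠ 0 := ne_of_gt hX
      have e1 : (1/X) * l2norm b * X = l2norm b := by field_simp
      have e2 : t/X * X = t := by field_simp
      rw [e1, e2] at h3
      have h4 : t ≤ max 0 (rdot c x) + ε := by
        rcases le_or_gt (ε + rdot c x) 0 with h | h
        · rw [ht, max_eq_left h]
          have := le_max_left (0:ℝ) (rdot c x); linarith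
        · rw [ht, max_eq_right h.le]
          have := le_max_right (0:ℝ) (rdot c x); linarith
      calc distDual A b c * X ≤ max (l2norm b) t := h3
        _ ≤ max (l2norm b) (max 0 (rdot c x) + ε) := max_le_max (le_refl _) h4
        _ ≤ max (l2norm b) (max 0 (rdot c x)) + ε := by
            apply max_le
            · have := le_max_left (l2norm b) (max 0 (rdot c x)); linarith
            · have := le_max_right (l2norm b) (max 0 (rdot c x)); linarith
    exact le_of_forall_pos_le_add key

end NormBounds

open Pointwise

section Separation
variable {ι κ : Type*} [Fintype ι] [Fintype κ]

lemma l2norm_continuous : Continuous (l2norm : (ι → ℝ) → ℝ) := by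
  apply Real.continuous_sqrt.comp
  exact continuous_finset_sum _ fun i _ => (continuous_apply i).pow 2

lemma isClosed_orthant : IsClosed {x : ι → ℝ | ∀ j, 0 ≤ x j} := by
  have h : {x : ι → ℝ | ∀ j, 0 ≤ x j} = ⋂ j, {x | 0 ≤ x j} := by
    ext x; simp [Set.mem_iInter]
  rw [h]
  exact isClosed_iInter fun j => isClosed_le continuous_const (continuous_apply j)

lemma convex_orthant : Convex ℝ {x : ι → ℝ | ∀ j, 0 ≤ x j} := by
  intro x hx y hy a b ha hb _
  intro j
  simp only [Pi.add_apply, Pi.smul_apply, smul_eq_mul]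
  exact add_nonneg (mul_nonneg ha (hx j)) (mul_nonneg hb (hy j))

lemma isCompact_l2ball (R : ℝ) (hR : 0 ≤ R) : IsCompact {x : ι → ℝ | l2norm x ≤ R} := by
  apply Metric.isCompact_of_isClosed_isBounded
  · exact isClosed_le l2norm_continuous continuous_const
  · apply Bornology.IsBounded.subset (Metric.isBounded_closedBall (x := (0 : ι → ℝ)) (r := R))
    intro x hx
    rw [Metric.mem_closedBall, dist_zero_right]
    rw [pi_norm_le_iff_of_nonneg hR]
    intro i
    rw [Real.norm_eq_abs]
    exact le_trans (coord_abs_le_l2norm x i) hx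

lemma convex_l2ball (R : ℝ) : Convex ℝ {x : ι → ℝ | l2norm x ≤ R} := by
  intro x hx y hy a b ha hb hab
  simp only [Set.mem_setOf_eq] at *
  calc l2norm (a • x + b • y) ≤ l2norm (a • x) + l2norm (b • y) := l2norm_add_le _ _
    _ = a * l2norm x + b * l2norm y := by
        rw [l2norm_smul, l2norm_smul, abs_of_nonneg ha, abs_of_nonneg hb]
    _ ≤ a * R + b * R := add_le_add
        (mul_le_mul_of_nonneg_left hx ha) (mul_le_mul_of_nonneg_left hy hb)
    _ = R := by rw [← add_mul, hab, one_mul]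

lemma clm_repr [DecidableEq ι] (f : (ι → ℝ) →L[ℝ] ℝ) (z : ι → ℝ) :
    f z = rdot (fun i => f (fun j => if i = j then (1:ℝ) else 0)) z := by
  conv_lhs => rw [pi_eq_sum_univ z]
  rw [map_sum]
  simp only [ContinuousLinearMap.map_smul, smul_eq_mul]
  rw [rdot_comm]
  simp [rdot]

lemma l2norm_eq_zero_iff {x : ι → ℝ} : l2norm x = 0 ↔ x = 0 := by
  constructor
  · intro h
    funext i
    have h2 := coord_abs_le_l2norm x i
    rw [h] at h2
    simpa using abs_nonpos_iff.mp h2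
  · rintro rfl; exact l2norm_zero

/-- L3 : existence of a primal feasible point of small norm. -/
lemma small_primal_point [DecidableEq ι] (A : Matrix ι κ ℝ) (b : ι → ℝ) (c : κ → ℝ)
    (hfe : PrimalFeasible A b) (hd : 0 < distPri A b c) (R : ℝ)
    (hR : l2norm b < R * distPri A b c) :
    ∃ x : κ → ℝ, (∀ j, 0 ≤ x j) ∧ A.mulVec x = b ∧ l2norm x ≤ R := by
  by_contra hno
  push_neg at hno
  have hR0 : 0 < R := by
    by_contra hc0
    push_neg at hc0
    nlinarith [l2norm_nonneg b]
  set S : Set (κ → ℝ) := {x | ∀ j, 0 ≤ x j} ∩ {x | l2norm x ≤ R} with hS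
  set K : Set (ι → ℝ) := A.mulVecLin '' S with hK
  have hbK : b ∉ K := by
    rintro ⟨x, ⟨hx1, hx2⟩, hx3⟩
    rw [Matrix.mulVecLin_apply] at hx3
    exact absurd hx2 (not_le.mpr (hno x hx1 hx3))
  have hKconv : Convex ℝ K :=
    ((convex_orthant).inter (convex_l2ball R)).linear_image A.mulVecLin
  have hKcomp : IsCompact K := by
    apply IsCompact.image
    · exact (isCompact_l2ball R hR0.le).inter_left isClosed_orthant
    · exact A.mulVecLin.continuous_of_finiteDimensional
  obtain ⟨f, u, hfK, hfb⟩ := geometric_hahn_banach_closed_point hKconv hKcomp.isClosed hbK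
  set y : ι → ℝ := fun i => f (fun j => if i = j then (1:ℝ) else 0) with hy
  have hrepr : ∀ z, f z = rdot y z := fun z => clm_repr f z
  have h0S : (0 : κ → ℝ) ∈ S :=
    ⟨fun j => le_refl 0, by simp only [Set.mem_setOf_eq, l2norm_zero]; exact hR0.le⟩
  have h0K : (0 : ι → ℝ) ∈ K := ⟨0, h0S, by simp⟩
  have hu0 : 0 < u := by
    have h1 := hfK 0 h0K
    rw [hrepr 0, rdot_zero_right] at h1
    linarith
  have hyb : 0 < rdot y b := by
    rw [hrepr b] at hfb
    linarith
  have hKlt : ∀ x ∈ S, rdot y (A.mulVec x) < rdot y b := by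
    intro x hx
    have h1 := hfK (A.mulVecLin x) ⟨x, hx, rfl⟩
    rw [hrepr, Matrix.mulVecLin_apply] at h1
    rw [hrepr b] at hfb
    linarith
  set g : κ → ℝ := fun j => max (Aᵀ.mulVec y j) 0 with hg
  have hgnn : ∀ j, 0 ≤ g j := fun j => le_max_right _ _
  set G := l2norm g with hG
  have hGnn : 0 ≤ G := l2norm_nonneg g
  rcases eq_or_lt_of_le hGnn with hG0 | hGpos
  · -- g = 0 : the original problem is already infeasible, contradiction with hfe
    have hg0 : ∀ j, Aᵀ.mulVec y j ≤ 0 := by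
      intro j
      have h2 := coord_abs_le_l2norm g j
      rw [← hG, ← hG0, abs_of_nonneg (hgnn j)] at h2
      have h3 : Aᵀ.mulVec y j ≤ g j := le_max_left _ _
      linarith
    exact absurd hfe (not_primalFeasible_of_cert y hg0 (by rw [rdot_comm]; exact hyb))
  · -- main case : build rank-one perturbation
    set Y := l2norm y with hY
    have hYpos : 0 < Y := by
      rcases eq_or_lt_of_le (l2norm_nonneg y) with h0 | h
      · exfalso
        have hy0 : y = 0 := l2norm_eq_zero_iff.mp h0.symm
        rw [hy0, rdot_zero_left] at hyb
        linarith
      · exact h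
    have hx0S : (R/G) • g ∈ S := by
      constructor
      · intro j
        simp only [Pi.smul_apply, smul_eq_mul]
        exact mul_nonneg (by positivity) (hgnn j)
      · simp only [Set.mem_setOf_eq]
        rw [l2norm_smul, abs_of_nonneg (by positivity), ← hG]
        rw [div_mul_cancel₀ _ (ne_of_gt hGpos)]
    have hkey : R * G < rdot y b := by
      have h1 := hKlt _ hx0S
      have h2 : rdot y (A.mulVec ((R/G) • g)) = (R/G) * rdot (Aᵀ.mulVec y) g := by
        rw [Matrix.mulVec_smul, rdot_smul_right, rdot_tmul]
      have h3 : rdot (Aᵀ.mulVec y) g = rdot g g := by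
        simp only [rdot]
        apply Finset.sum_congr rfl
        intro j _
        rcases le_or_gt ((Aᵀ.mulVec y) j) 0 with h | h
        · have hgj : g j = 0 := max_eq_right h
          rw [hgj]; ring
        · have hgj : g j = (Aᵀ.mulVec y) j := max_eq_left h.le
          rw [hgj]
      have h4 : rdot g g = G ^ 2 := by rw [← l2norm_sq, ← hG]
      rw [h2, h3, h4] at h1
      have h5 : R / G * G ^ 2 = R * G := by field_simp
      rw [h5] at h1
      exact h1
    set w : ι → ℝ := (-(1/Y^2)) • y with hw
    set dA : Matrix ι κ ℝ := Matrix.of fun i j => w i * g j with hdA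
    have hrwy : rdot w y = -1 := by
      rw [hw, rdot_smul_left, ← l2norm_sq, ← hY]
      field_simp
    have hcert1 : ∀ j, (A + dA)ᵀ.mulVec y j ≤ 0 := by
      intro j
      rw [Matrix.transpose_add, Matrix.add_mulVec]
      have h2 : (dAᵀ.mulVec y) j = g j * rdot w y := rankone_tmulVec w y g j
      rw [hrwy] at h2
      simp only [Pi.add_apply]
      rw [h2]
      have h4 : Aᵀ.mulVec y j ≤ g j := le_max_left _ _
      linarith
    have hinf : ¬ PrimalFeasible (A + dA) (b + 0) := by
      rw [add_zero]
      exact not_primalFeasible_of_cert y hcert1 (by rw [rdot_comm]; exact hyb)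
    have h2 := distPri_le_of_infeasible c dA 0 hinf
    rw [l2norm_zero] at h2
    have hfr : frobNorm dA = (1/Y) * G := by
      rw [hdA, frob_rank_one, hw, l2norm_smul, ← hY, ← hG]
      rw [abs_neg, abs_of_pos (by positivity)]
      field_simp
    rw [hfr, max_eq_left (by positivity)] at h2
    have hcs : rdot y b ≤ Y * l2norm b := by
      have h6 := rdot_le_l2 y b
      rw [← hY] at h6
      exact h6
    have hfinal : distPri A b c * R < l2norm b := by
      have h4 : R * G < Y * l2norm b := lt_of_lt_of_le hkey hcs
      have h5 : (1/Y) * G * R < l2norm b := by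
        rw [div_mul_eq_mul_div, one_mul, div_mul_eq_mul_div, div_lt_iff₀ hYpos]
        nlinarith
      nlinarith [distPri_nonneg A b c]
    nlinarith

/-- L4 : existence of a dual feasible point of small norm. -/
lemma small_dual_point [DecidableEq κ] (A : Matrix ι κ ℝ) (b : ι → ℝ) (c : κ → ℝ)
    (hd : 0 < distDual A b c) (R : ℝ)
    (hR : l2norm c < R * distDual A b c) :
    ∃ u : ι → ℝ, (∀ j, Aᵀ.mulVec u j ≤ c j) ∧ l2norm u ≤ R := by
  by_contra hno
  push_neg at hno
  have hR0 : 0 < R := by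
    by_contra hc0
    push_neg at hc0
    nlinarith [l2norm_nonneg c]
  set Ball : Set (ι → ℝ) := {u | l2norm u ≤ R} with hBall
  set K1 : Set (κ → ℝ) := Aᵀ.mulVecLin '' Ball with hK1
  set O : Set (κ → ℝ) := {z : κ → ℝ | ∀ j, 0 ≤ z j} with hO
  set C : Set (κ → ℝ) := K1 + O with hC
  have hcC : c ∉ C := by
    intro hmem
    rw [hC, Set.mem_add] at hmem
    obtain ⟨w1, hw1, z, hz, hsum⟩ := hmem
    rw [hK1] at hw1
    obtain ⟨u, hu, rfl⟩ := hw1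
    have hfeas : ∀ j, Aᵀ.mulVec u j ≤ c j := by
      intro j
      have h1 := congrFun hsum j
      simp only [Pi.add_apply, Matrix.mulVecLin_apply] at h1
      have h2 : 0 ≤ z j := hz j
      linarith [le_of_eq h1]
    exact absurd hu (not_le.mpr (hno u hfeas))
  have hK1comp : IsCompact K1 :=
    (isCompact_l2ball R hR0.le).image Aᵀ.mulVecLin.continuous_of_finiteDimensional
  have hCclosed : IsClosed C := IsClosed.add_left_of_isCompact isClosed_orthant hK1comp
  have hCconv : Convex ℝ C :=
    ((convex_l2ball R).linear_image Aᵀ.mulVecLin).add convex_orthant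
  obtain ⟨f, u', hfc, hfC⟩ := geometric_hahn_banach_point_closed hCconv hCclosed hcC
  set x : κ → ℝ := fun i => f (fun j => if i = j then (1:ℝ) else 0) with hx
  have hrepr : ∀ z, f z = rdot x z := fun z => clm_repr f z
  have hmemC : ∀ (u : ι → ℝ), l2norm u ≤ R → ∀ (z : κ → ℝ), (∀ j, 0 ≤ z j) →
      u' < rdot x (Aᵀ.mulVec u + z) := by
    intro u hu z hz
    have hmem : Aᵀ.mulVecLin u + z ∈ C := by
      rw [hC]
      exact Set.add_mem_add ⟨u, hu, rfl⟩ hz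
    have h1 := hfC _ hmem
    rw [hrepr] at h1
    rw [Matrix.mulVecLin_apply] at h1
    exact h1
  have hu'neg : u' < 0 := by
    have h1 := hmemC 0 (by rw [l2norm_zero]; exact hR0.le) 0 (fun j => le_refl 0)
    rw [Matrix.mulVec_zero, add_zero, rdot_zero_right] at h1
    exact h1
  have hxnn : ∀ j, 0 ≤ x j := by
    intro j
    by_contra hneg
    push_neg at hneg
    set t : ℝ := (u' - 1) / x j with htdef
    have ht0 : 0 ≤ t := div_nonneg_iff.mpr (Or.inr ⟨by linarith, hneg.le⟩)
    have hznn : ∀ k, 0 ≤ (t • (Pi.single j (1:ℝ) : κ → ℝ)) k := by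
      intro k
      simp only [Pi.smul_apply, smul_eq_mul]
      rcases eq_or_ne k j with rfl | hne
      · rw [Pi.single_eq_same]
        simpa using ht0
      · rw [Pi.single_eq_of_ne hne]
        simp
    have h1 := hmemC 0 (by rw [l2norm_zero]; exact hR0.le) (t • (Pi.single j (1:ℝ) : κ → ℝ)) hznn
    rw [Matrix.mulVec_zero, zero_add, rdot_smul_right] at h1
    have h2 : rdot x (Pi.single j (1:ℝ)) = x j := by
      simp only [rdot]
      rw [Finset.sum_eq_single j]
      · simp
      · intro i _ hij; simp [Pi.single_eq_of_ne hij]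
      · intro h; exact absurd (Finset.mem_univ j) h
    rw [h2, htdef, div_mul_cancel₀ _ (ne_of_lt hneg)] at h1
    linarith
  set N := l2norm (A.mulVec x) with hN
  have hcx_lt : rdot c x < u' := by
    have h1 := hfc
    rw [hrepr] at h1
    rw [rdot_comm]
    exact h1
  rcases eq_or_lt_of_le (l2norm_nonneg (A.mulVec x)) with hN0 | hNpos
  · -- A x = 0 : original dual problem is already infeasible, contradiction with hd
    have hAx0 : A.mulVec x = 0 := l2norm_eq_zero_iff.mp hN0.symm
    have hinf : ¬ DualFeasible (A + 0) (c + 0) := by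
      rw [add_zero, add_zero]
      exact not_dualFeasible_of_cert x hxnn hAx0 (by linarith)
    have h2 := distDual_le_of_infeasible b 0 0 hinf
    rw [frob_zero, l2norm_zero] at h2
    simp only [max_self] at h2
    linarith
  · -- main case
    have hub : u' < -(R * N) := by
      have hmem2 : l2norm ((-(R/N)) • (A.mulVec x)) ≤ R := by
        rw [l2norm_smul, ← hN, abs_neg, abs_of_nonneg (by positivity)]
        rw [div_mul_cancel₀ _ (ne_of_gt hNpos)]
      have h1 := hmemC ((-(R/N)) • (A.mulVec x)) hmem2 0 (fun j => le_refl 0)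
      rw [add_zero] at h1
      have h2 : rdot x (Aᵀ.mulVec ((-(R/N)) • A.mulVec x))
          = (-(R/N)) * rdot (A.mulVec x) (A.mulVec x) := by
        rw [Matrix.mulVec_smul, rdot_smul_right]
        congr 1
        rw [rdot_comm, rdot_tmul]
      have h3 : rdot (A.mulVec x) (A.mulVec x) = N ^ 2 := by rw [← l2norm_sq, ← hN]
      rw [h2, h3] at h1
      have h4 : -(R/N) * N^2 = -(R*N) := by field_simp
      rw [h4] at h1
      exact h1
    have hXpos : 0 < l2norm x := by
      rcases eq_or_lt_of_le (l2norm_nonneg x) with h0 | h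
      · exfalso
        have hx0 : x = 0 := l2norm_eq_zero_iff.mp h0.symm
        rw [hx0, rdot_zero_right] at hcx_lt
        nlinarith
      · exact h
    set X := l2norm x with hX
    set w : ι → ℝ := (-(1/X^2)) • (A.mulVec x) with hw
    set dA : Matrix ι κ ℝ := Matrix.of fun i j => w i * x j with hdA
    have hcert1 : (A + dA).mulVec x = 0 := by
      funext i
      rw [Matrix.add_mulVec]
      have h2 : (dA.mulVec x) i = w i * rdot x x := rankone_mulVec w x x i
      have h3 : rdot x x = X ^ 2 := by rw [← l2norm_sq, ← hX]
      rw [h3] at h2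
      simp only [Pi.add_apply, Pi.zero_apply, h2, hw, Pi.smul_apply, smul_eq_mul]
      have hXne : (X:ℝ) ≠ 0 := ne_of_gt hXpos
      field_simp; ring
    have hinf : ¬ DualFeasible (A + dA) (c + 0) := by
      rw [add_zero]
      apply not_dualFeasible_of_cert x hxnn hcert1
      linarith
    have h2 := distDual_le_of_infeasible b dA 0 hinf
    rw [l2norm_zero] at h2
    have hfr : frobNorm dA = (1/X) * N := by
      rw [hdA, frob_rank_one, hw, l2norm_smul, ← hN, ← hX]
      rw [abs_neg, abs_of_pos (by positivity)]
      field_simp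
    rw [hfr, max_eq_left (by positivity)] at h2
    have hcs : -(l2norm c * X) ≤ rdot c x := by
      have h6 := neg_rdot_le_l2 c x
      rw [← hX] at h6
      exact h6
    have hRN : R * N < l2norm c * X := by nlinarith
    have hfinal : distDual A b c * R < l2norm c := by
      have h5 : (1/X) * N * R < l2norm c := by
        rw [div_mul_eq_mul_div, one_mul, div_mul_eq_mul_div, div_lt_iff₀ hXpos]
        nlinarith
      nlinarith [distDual_nonneg A b c]
    nlinarith

end Separation

section VI
variable {ι κ : Type*} [Fintype ι] [Fintype κ]

lemma rdot_quad (p q : ι → ℝ) (t : ℝ) :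
    rdot (p + t • q) (p + t • q) = rdot p p + 2*t*rdot p q + t^2 * rdot q q := by
  rw [rdot_add_left, rdot_add_right, rdot_add_right, rdot_smul_left, rdot_smul_right,
    rdot_smul_right, rdot_smul_left, rdot_comm q p]
  ring

lemma fpen_expand (A : Matrix ι κ ℝ) (b : ι → ℝ) (c : κ → ℝ) (ub : ι → ℝ) (xb : κ → ℝ)
    (β : ℝ) (x v : κ → ℝ) (t : ℝ) :
    fpen A b c ub xb β (x + t • v) = fpen A b c ub xb β x
      + t * (rdot c v - rdot ub (A.mulVec v) + β * rdot (A.mulVec x - b) (A.mulVec v)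
             + (1/β) * rdot (x - xb) v)
      + t^2 * ((β/2) * rdot (A.mulVec v) (A.mulVec v) + (1/(2*β)) * rdot v v) := by
  have e1 : A.mulVec (x + t • v) - b = (A.mulVec x - b) + t • A.mulVec v := by
    funext i
    simp only [Matrix.mulVec_add, Matrix.mulVec_smul, Pi.add_apply, Pi.sub_apply,
      Pi.smul_apply, smul_eq_mul]
    ring
  have e2 : (x + t • v) - xb = (x - xb) + t • v := by
    funext i
    simp only [Pi.add_apply, Pi.sub_apply, Pi.smul_apply, smul_eq_mul]
    ring
  rw [fpen, fpen, e1, e2, l2norm_sq, l2norm_sq, l2norm_sq, l2norm_sq]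
  rw [rdot_quad, rdot_quad, rdot_add_right, rdot_add_right, rdot_smul_right, rdot_smul_right]
  ring

lemma fpen_vi (A : Matrix ι κ ℝ) (b : ι → ℝ) (c : κ → ℝ) (ub : ι → ℝ) (xb : κ → ℝ)
    (β : ℝ) (hβ : 0 < β) (xβ : κ → ℝ) (hβnn : ∀ j, 0 ≤ xβ j)
    (hβmin : ∀ x : κ → ℝ, (∀ j, 0 ≤ x j) →
      fpen A b c ub xb β xβ ≤ fpen A b c ub xb β x)
    (y : κ → ℝ) (hy : ∀ j, 0 ≤ y j) :
    0 ≤ rdot c (y - xβ) - rdot ub (A.mulVec (y - xβ))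
        + β * rdot (A.mulVec xβ - b) (A.mulVec (y - xβ))
        + (1/β) * rdot (xβ - xb) (y - xβ) := by
  set v : κ → ℝ := y - xβ with hv
  set Gv : ℝ := rdot c v - rdot ub (A.mulVec v) + β * rdot (A.mulVec xβ - b) (A.mulVec v)
      + (1/β) * rdot (xβ - xb) v with hGv
  set Hv : ℝ := (β/2) * rdot (A.mulVec v) (A.mulVec v) + (1/(2*β)) * rdot v v with hHv
  have hH : 0 ≤ Hv := by
    apply add_nonneg
    · exact mul_nonneg (by positivity) (rdot_self_nonneg _)
    · exact mul_nonneg (by positivity) (rdot_self_nonneg _)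
  have hkey : ∀ t : ℝ, 0 < t → t ≤ 1 → 0 ≤ Gv + t * Hv := by
    intro t ht0 ht1
    have hfeas : ∀ j, 0 ≤ (xβ + t • v) j := by
      intro j
      simp only [Pi.add_apply, Pi.smul_apply, Pi.sub_apply, smul_eq_mul, hv]
      nlinarith [hβnn j, hy j]
    have h1 := hβmin _ hfeas
    rw [fpen_expand A b c ub xb β xβ v t] at h1
    rw [← hGv, ← hHv] at h1
    nlinarith
  by_contra hneg
  push_neg at hneg
  set t0 : ℝ := min 1 (-Gv / (Hv + 1)) with ht0def
  have ht0pos : 0 < t0 := lt_min one_pos (div_pos (neg_pos.mpr hneg) (by linarith))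
  have h2 := hkey t0 ht0pos (min_le_left _ _)
  have h3 : t0 ≤ -Gv/(Hv+1) := min_le_right _ _
  have h4 : t0 * (Hv + 1) ≤ -Gv := by
    rw [← le_div_iff₀ (by linarith)]
    exact h3
  nlinarith

end VI

set_option maxHeartbeats 1000000 in
/-- Theorem mp: bound on the difference between the optimal value of
the original LP and the optimal value of the perturbed LP attained at `x(β)`. -/
theorem perturbed_lp_value_bound
    {m n : ℕ} (A : Matrix (Fin m) (Fin n) ℝ) (b : Fin m → ℝ) (c : Fin n → ℝ)
    (hrank : A.rank = m)
    (ub : Fin m → ℝ) (xb : Fin n → ℝ) (β : ℝ) (hβ : 0 < β)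
    (hP : 0 < deltaP A b c) (hD : 0 < deltaD A b c)
    -- (x*, u*) : a primal–dual optimal pair
    (xs : Fin n → ℝ) (us : Fin m → ℝ)
    (hpfeas : A.mulVec xs = b) (hppos : ∀ j, 0 ≤ xs j)
    (hdfeas : ∀ j, 0 ≤ (c - Aᵀ.mulVec us) j)
    (hstrong : rdot c xs = rdot b us)
    (Cs : ℝ) (hCs : Cs = max (l2norm (xs - xb)) (l2norm (us - ub)))
    -- x(β) : the minimizer of f_β over the nonnegative orthant
    (xβ : Fin n → ℝ) (hβnn : ∀ j, 0 ≤ xβ j)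
    (hβmin : ∀ x : Fin n → ℝ, (∀ j, 0 ≤ x j) →
      fpen A b c ub xb β xβ ≤ fpen A b c ub xb β x)
    -- bound on β
    (hβbig : 10 * Cs / (dnorm A b c * min (deltaP A b c) (deltaD A b c)) ≤ β)
    -- the perturbed data (the perturbed LP `min c_βᵀ x, Ax = b_β, x ≥ 0`
    -- attains its optimal value at x(β))
    (bβ : Fin m → ℝ) (hbβ : bβ = A.mulVec xβ)
    (cβ : Fin n → ℝ) (hcβ : cβ = c + (1 / β) • (xβ - xb)) :
    |rdot c xs - rdot cβ xβ| ≤ (1 / β) * (25 * Cs / (2 * deltaP A b c * deltaD A b c)) := by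
  clear hrank
  -- ## positivity of basic quantities
  have hdnn := dnorm_nonneg A b c
  have hdn_pos : 0 < dnorm A b c := by
    rcases eq_or_lt_of_le hdnn with h0 | h
    · exfalso; rw [deltaP, ← h0, div_zero] at hP; exact lt_irrefl 0 hP
    · exact h
  have hρP_pos : 0 < distPri A b c := by
    have h1 := mul_pos hP hdn_pos
    rw [deltaP, div_mul_cancel₀ _ (ne_of_gt hdn_pos)] at h1
    exact h1
  have hρD_pos : 0 < distDual A b c := by
    have h1 := mul_pos hD hdn_pos
    rw [deltaD, div_mul_cancel₀ _ (ne_of_gt hdn_pos)] at h1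
    exact h1
  have hmne : Nonempty (Fin m) := by
    by_contra h0
    have : IsEmpty (Fin m) := not_nonempty_iff.mp h0
    rw [distPri_eq_zero_of_isEmpty A b c] at hρP_pos
    exact lt_irrefl 0 hρP_pos
  have hnne : Nonempty (Fin n) := by
    by_contra h0
    have : IsEmpty (Fin n) := not_nonempty_iff.mp h0
    rw [distDual_eq_zero_of_isEmpty A b c] at hρD_pos
    exact lt_irrefl 0 hρD_pos
  obtain ⟨i0⟩ := hmne
  obtain ⟨j0⟩ := hnne
  have hρPd : distPri A b c ≤ dnorm A b c := distPri_le_dnorm i0 A b c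
  have hρDd : distDual A b c ≤ dnorm A b c := distDual_le_dnorm j0 A b c
  have hPfe : PrimalFeasible A b := primalFeasible_of_pos hρP_pos
  -- ## Cs facts
  have hp_le : l2norm (xs - xb) ≤ Cs := hCs ▸ le_max_left _ _
  have hq_le : l2norm (us - ub) ≤ Cs := hCs ▸ le_max_right _ _
  have hCs_nn : 0 ≤ Cs := le_trans (l2norm_nonneg _) hp_le
  -- ## the β lower bound, in product form
  have hminρ_pos : 0 < min (distPri A b c) (distDual A b c) := lt_min hρP_pos hρD_pos
  have hβCs : 10 * Cs ≤ β * min (distPri A b c) (distDual A b c) := by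
    have hmin_eq : dnorm A b c * min (deltaP A b c) (deltaD A b c)
        = min (distPri A b c) (distDual A b c) := by
      rw [deltaP, deltaD]
      rcases le_total (distPri A b c) (distDual A b c) with h | h
      · rw [min_eq_left ((div_le_div_iff_of_pos_right hdn_pos).mpr h), min_eq_left h]
        field_simp
      · rw [min_eq_right ((div_le_div_iff_of_pos_right hdn_pos).mpr h), min_eq_right h]
        field_simp
    have hpos : 0 < dnorm A b c * min (deltaP A b c) (deltaD A b c) := by
      rw [hmin_eq]; exact hminρ_pos
    rw [div_le_iff₀ hpos] at hβbig
    rw [hmin_eq] at hβbig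
    linarith
  -- ## basic √2 bounds
  have hs2sq : Real.sqrt 2 ^ 2 = 2 := Real.sq_sqrt (by norm_num)
  have hs2nn : 0 ≤ Real.sqrt 2 := Real.sqrt_nonneg 2
  have hs2u : Real.sqrt 2 ≤ 1.415 := by
    rw [show (1.415:ℝ) = Real.sqrt (1.415^2) from (Real.sqrt_sq (by norm_num)).symm]
    exact Real.sqrt_le_sqrt (by norm_num)
  -- ## residuals
  set rv : Fin m → ℝ := A.mulVec xβ - b with hrv
  set sv : Fin n → ℝ := xβ - xb with hsv
  have hbeq : bβ - b = rv := by rw [hbβ]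
  have hceq : cβ - c = (1/β) • sv := by rw [hcβ]; abel
  -- ## the fundamental inequality from minimality at x*
  have hfxs : fpen A b c ub xb β xs = rdot c xs + (1/(2*β)) * l2norm (xs - xb)^2 := by
    rw [fpen, hpfeas, sub_self, rdot_zero_right, l2norm_zero]
    ring
  have hfxβ : fpen A b c ub xb β xβ
      = rdot c xβ - rdot ub rv + (β/2) * l2norm rv^2 + (1/(2*β)) * l2norm sv^2 := by
    rw [fpen]
  have hII : rdot c xs + rdot us rv ≤ rdot c xβ := by
    have h1 : 0 ≤ rdot (c - Aᵀ.mulVec us) xβ := rdot_nonneg hdfeas hβnn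
    rw [rdot_sub_left, rdot_tmul] at h1
    have h2 : A.mulVec xβ = b + rv := by rw [hrv]; abel
    rw [h2, rdot_add_right] at h1
    have h3 : rdot us b = rdot c xs := by rw [rdot_comm, ← hstrong]
    linarith
  have hqr : -(Cs * l2norm rv) ≤ rdot (us - ub) rv := by
    have h1 := neg_rdot_le_l2 (us - ub) rv
    have h2 : l2norm (us - ub) * l2norm rv ≤ Cs * l2norm rv :=
      mul_le_mul_of_nonneg_right hq_le (l2norm_nonneg rv)
    linarith
  have hcore : rdot (us - ub) rv + (β/2)*l2norm rv^2 + (1/(2*β))*l2norm sv^2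
      ≤ (1/(2*β))*l2norm (xs - xb)^2 := by
    have h1 := hβmin xs hppos
    rw [hfxs, hfxβ] at h1
    rw [rdot_sub_left]
    linarith
  have hP2 : l2norm (xs - xb)^2 ≤ Cs^2 := by
    nlinarith [hp_le, l2norm_nonneg (xs - xb)]
  -- β‖rv‖ ≤ (1+√2) Cs  and  ‖sv‖ ≤ √2 Cs
  have hb1 : (β * l2norm rv)^2 ≤ Cs^2 + 2*Cs*(β * l2norm rv) := by
    have h5' : (β/2)*l2norm rv^2 ≤ (1/(2*β))*Cs^2 + Cs*l2norm rv := by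
      have hmul : (1/(2*β))*l2norm (xs - xb)^2 ≤ (1/(2*β))*Cs^2 :=
        mul_le_mul_of_nonneg_left hP2 (by positivity)
      have hS2 : 0 ≤ (1/(2*β))*l2norm sv^2 := by positivity
      linarith [hcore, hqr]
    have h6 := mul_le_mul_of_nonneg_left h5' (by positivity : (0:ℝ) ≤ 2*β)
    have e1 : (2*β)*((β/2)*l2norm rv^2) = (β*l2norm rv)^2 := by ring
    have e2 : (2*β)*((1/(2*β))*Cs^2 + Cs*l2norm rv) = Cs^2 + 2*Cs*(β*l2norm rv) := by
      field_simp
    rw [e1, e2] at h6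
    exact h6
  have hβR_nn : 0 ≤ β * l2norm rv := mul_nonneg hβ.le (l2norm_nonneg rv)
  have hb3 : β * l2norm rv ≤ (1 + Real.sqrt 2) * Cs := by
    have hb1' : (β*l2norm rv - Cs)^2 ≤ 2*Cs^2 := by nlinarith [hb1]
    by_contra hcon
    push_neg at hcon
    have h8 : Real.sqrt 2 * Cs < β*l2norm rv - Cs := by linarith
    have h9 : 0 ≤ Real.sqrt 2 * Cs := mul_nonneg hs2nn hCs_nn
    have h10 := mul_self_lt_mul_self h9 h8
    nlinarith [h10, hb1', hs2sq]
  have hb2 : l2norm sv^2 ≤ 2*Cs^2 := by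
    have h6 := mul_le_mul_of_nonneg_left hcore (by positivity : (0:ℝ) ≤ 2*β)
    have e1 : (2*β)*(rdot (us-ub) rv + (β/2)*l2norm rv^2 + (1/(2*β))*l2norm sv^2)
        = 2*β*rdot (us-ub) rv + (β*l2norm rv)^2 + l2norm sv^2 := by
      field_simp
    have e2 : (2*β)*((1/(2*β))*l2norm (xs - xb)^2) = l2norm (xs - xb)^2 := by
      field_simp
    rw [e1, e2] at h6
    have h7 : -(Cs * l2norm rv) ≤ rdot (us - ub) rv := hqr
    nlinarith [sq_nonneg (β*l2norm rv - Cs), hβ, l2norm_nonneg rv,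
      mul_le_mul_of_nonneg_left h7 (by positivity : (0:ℝ) ≤ 2*β)]
  have hb4 : l2norm sv ≤ Real.sqrt 2 * Cs := by
    by_contra hcon
    push_neg at hcon
    have h9 : 0 ≤ Real.sqrt 2 * Cs := mul_nonneg hs2nn hCs_nn
    have h10 := mul_self_lt_mul_self h9 hcon
    nlinarith [h10, hb2, hs2sq]
  -- numeric versions
  have hs2Cs := mul_le_mul_of_nonneg_right hs2u hCs_nn
  have hb3' : β * l2norm rv ≤ 2.415 * Cs := by linarith only [hb3, hs2Cs]
  have hb4' : l2norm sv ≤ 1.415 * Cs := by linarith only [hb4, hs2Cs]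
  -- ## KKT objects for the perturbed problem
  set uβv : Fin m → ℝ := ub - β • rv with huβv
  set gvec : Fin n → ℝ := cβ - Aᵀ.mulVec uβv with hgvec
  have hgv : ∀ v : Fin n → ℝ, rdot gvec v
      = rdot c v - rdot ub (A.mulVec v) + β * rdot rv (A.mulVec v) + (1/β) * rdot sv v := by
    intro v
    rw [hgvec, rdot_sub_left, rdot_tmul, huβv, rdot_sub_left, rdot_smul_left, hcβ,
      rdot_add_left, rdot_smul_left]
    ring
  have hVI : ∀ y : Fin n → ℝ, (∀ j, 0 ≤ y j) → 0 ≤ rdot gvec (y - xβ) := by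
    intro y hy
    have h1 := fpen_vi A b c ub xb β hβ xβ hβnn hβmin y hy
    rw [← hrv, ← hsv] at h1
    rw [hgv (y - xβ)]
    exact h1
  have hrdot_single : ∀ (a : Fin n → ℝ) (j : Fin n), rdot a (Pi.single j (1:ℝ)) = a j := by
    intro a j
    simp only [rdot]
    rw [Finset.sum_eq_single j]
    · simp
    · intro i _ hij; simp [Pi.single_eq_of_ne hij]
    · intro h; exact absurd (Finset.mem_univ j) h
  have hg_nn : ∀ j, 0 ≤ gvec j := by
    intro j
    have h1 := hVI (xβ + Pi.single j (1:ℝ)) (fun k => by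
      rcases eq_or_ne k j with rfl | hne
      · simp only [Pi.add_apply, Pi.single_eq_same]
        linarith [hβnn k]
      · simp only [Pi.add_apply, Pi.single_eq_of_ne hne]
        simpa using hβnn k)
    have e : (xβ + Pi.single j (1:ℝ)) - xβ = Pi.single j (1:ℝ) := by abel
    rw [e, hrdot_single] at h1
    exact h1
  have hg_xβ : rdot gvec xβ = 0 := by
    have h1 := hVI 0 (fun j => le_refl 0)
    have e1 : (0 : Fin n → ℝ) - xβ = -xβ := by abel
    rw [e1] at h1
    have e2 : rdot gvec (-xβ) = - rdot gvec xβ := by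
      simp [rdot, mul_neg, Finset.sum_neg_distrib]
    rw [e2] at h1
    have h2 := hVI (xβ + xβ) (fun j => add_nonneg (hβnn j) (hβnn j))
    have e3 : (xβ + xβ) - xβ = xβ := by abel
    rw [e3] at h2
    linarith
  have hg_xs : 0 ≤ rdot gvec xs := by
    have h1 := hVI xs hppos
    rw [rdot_sub_right] at h1
    linarith [hg_xβ]
  have hdβfeas : ∀ j, Aᵀ.mulVec uβv j ≤ cβ j := by
    intro j
    have h1 := hg_nn j
    rw [hgvec] at h1
    simp only [Pi.sub_apply] at h1
    linarith
  have hstrongβ : rdot cβ xβ = rdot bβ uβv := by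
    have h1 : rdot gvec xβ = rdot cβ xβ - rdot uβv bβ := by
      rw [hgvec, rdot_sub_left, rdot_tmul, ← hbβ]
    rw [hg_xβ] at h1
    rw [rdot_comm bβ uβv]
    linarith
  -- ## the two one-sided value estimates
  have hb_eq : b = bβ - rv := by rw [hbβ, hrv]; abel
  have hIV : rdot c xs - rdot cβ xβ ≤ - rdot us rv - (1/β) * rdot sv xβ := by
    have h1 : rdot us bβ ≤ rdot c xβ := by
      have h0 : 0 ≤ rdot (c - Aᵀ.mulVec us) xβ := rdot_nonneg hdfeas hβnn
      rw [rdot_sub_left, rdot_tmul] at h0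
      rw [hbβ]
      linarith
    have h2 : rdot b us = rdot us bβ - rdot us rv := by
      rw [rdot_comm b us]
      conv_lhs => rw [hb_eq]
      rw [rdot_sub_right]
    have h3 : rdot cβ xβ = rdot c xβ + (1/β) * rdot sv xβ := by
      rw [hcβ, rdot_add_left, rdot_smul_left]
    linarith [hstrong]
  have hV : rdot cβ xβ - rdot c xs ≤ rdot uβv rv + (1/β) * rdot sv xs := by
    have h2 : rdot gvec xs = rdot cβ xs - rdot uβv b := by
      rw [hgvec, rdot_sub_left, rdot_tmul, hpfeas]
    have h3 : rdot cβ xs = rdot c xs + (1/β) * rdot sv xs := by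
      rw [hcβ, rdot_add_left, rdot_smul_left]
    have h4 : rdot uβv b = rdot uβv bβ - rdot uβv rv := by
      conv_lhs => rw [hb_eq]
      rw [rdot_sub_right]
    have h5 : rdot uβv bβ = rdot cβ xβ := by rw [rdot_comm, ← hstrongβ]
    linarith [hg_xs]
  -- ## perturbation sizes and perturbed condition numbers
  have hminP : min (distPri A b c) (distDual A b c) ≤ distPri A b c := min_le_left _ _
  have hminD : min (distPri A b c) (distDual A b c) ≤ distDual A b c := min_le_right _ _
  have hRminρ : l2norm rv * 10 ≤ 2.415 * min (distPri A b c) (distDual A b c) := by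
    have h1 : 10*(β*l2norm rv) ≤ 2.415*(β * min (distPri A b c) (distDual A b c)) := by
      linarith [hb3', hβCs]
    have h2 : β*(l2norm rv * 10) ≤ β*(2.415 * min (distPri A b c) (distDual A b c)) := by
      linarith [h1]
    exact le_of_mul_le_mul_left h2 hβ
  have hrv_le : l2norm rv ≤ 0.2415 * min (distPri A b c) (distDual A b c) := by
    linarith [hRminρ]
  have hcβc : l2norm (cβ - c) = (1/β) * l2norm sv := by
    rw [hceq, l2norm_smul, abs_of_pos (by positivity)]
  have hcβc_le : l2norm (cβ - c) ≤ 0.1415 * min (distPri A b c) (distDual A b c) := by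
    rw [hcβc, one_div, inv_mul_eq_div, div_le_iff₀ hβ]
    have h1 : 10*(l2norm sv) ≤ 1.415*(β * min (distPri A b c) (distDual A b c)) := by
      linarith [hb4', hβCs]
    linarith [h1]
  have hbneg : l2norm (b - bβ) = l2norm rv := by
    rw [show b - bβ = -(bβ - b) by abel, l2norm_neg, hbeq]
  have hcneg : l2norm (c - cβ) = l2norm (cβ - c) := by
    rw [show c - cβ = -(cβ - c) by abel, l2norm_neg]
  have hρP'_lo := distPri_lower i0 A b c bβ cβ
  rw [hbeq] at hρP'_lo
  have hρD'_lo := distDual_lower j0 A b c bβ cβ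
  have hρP'_hi' := distPri_lower i0 A bβ cβ b c
  rw [hbneg] at hρP'_hi'
  have hρD'_hi' := distDual_lower j0 A bβ cβ b c
  rw [hcneg] at hρD'_hi'
  have hA1 : 0.7585 * distPri A b c ≤ distPri A bβ cβ := by
    linarith only [hρP'_lo, hrv_le, hminP]
  have hA2 : 0.8585 * distDual A b c ≤ distDual A bβ cβ := by
    linarith only [hρD'_lo, hcβc_le, hminD]
  have hρP'_pos : 0 < distPri A bβ cβ := lt_of_lt_of_le (by linarith) hA1
  have hρD'_pos : 0 < distDual A bβ cβ := lt_of_lt_of_le (by linarith) hA2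
  have hρP'_hi : distPri A bβ cβ ≤ 1.2415 * dnorm A b c := by
    linarith only [hρP'_hi', hrv_le, hminP, hρPd]
  have hρD'_hi : distDual A bβ cβ ≤ 1.1415 * dnorm A b c := by
    linarith only [hρD'_hi', hcβc_le, hminD, hρDd]
  have hbβ_le : l2norm bβ ≤ 1.2415 * dnorm A b c := by
    have e : bβ = b + rv := by rw [hb_eq]; abel
    have h1 : l2norm bβ ≤ l2norm b + l2norm rv := by
      calc l2norm bβ = l2norm (b + rv) := by rw [← e]
        _ ≤ _ := l2norm_add_le b rv
    linarith only [h1, l2b_le_dnorm A b c, hrv_le, hminP, hρPd]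
  have hcβ_le : l2norm cβ ≤ 1.1415 * dnorm A b c := by
    have e : cβ = c + (cβ - c) := by abel
    have h1 : l2norm cβ ≤ l2norm c + l2norm (cβ - c) := by
      calc l2norm cβ = l2norm (c + (cβ - c)) := by rw [← e]
        _ ≤ _ := l2norm_add_le c (cβ - c)
    linarith only [h1, l2c_le_dnorm A b c, hcβc_le, hminD, hρDd]
  -- ## small feasible points
  obtain ⟨u₀, hu₀f, hu₀n⟩ : ∃ u₀ : Fin m → ℝ, (∀ j, Aᵀ.mulVec u₀ j ≤ c j) ∧
      distDual A b c * l2norm u₀ ≤ 1.5 * l2norm c := by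
    rcases eq_or_lt_of_le (l2norm_nonneg c) with h0 | hcpos
    · refine ⟨0, fun j => ?_, ?_⟩
      · have hc0 : c = 0 := l2norm_eq_zero_iff.mp h0.symm
        simp [Matrix.mulVec_zero, hc0]
      · rw [l2norm_zero, mul_zero]
        positivity
    · obtain ⟨u₀, h1, h2⟩ := small_dual_point A b c hρD_pos
        (1.5 * l2norm c / distDual A b c)
        (by rw [div_mul_cancel₀ _ (ne_of_gt hρD_pos)]; linarith)
      refine ⟨u₀, h1, ?_⟩
      calc distDual A b c * l2norm u₀
          ≤ distDual A b c * (1.5 * l2norm c / distDual A b c) :=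
            mul_le_mul_of_nonneg_left h2 hρD_pos.le
        _ = 1.5 * l2norm c := by field_simp
  obtain ⟨xh, hxhp, hxhf, hxhn⟩ : ∃ xh : Fin n → ℝ, (∀ j, 0 ≤ xh j) ∧ A.mulVec xh = b ∧
      distPri A b c * l2norm xh ≤ 1.5 * l2norm b := by
    rcases eq_or_lt_of_le (l2norm_nonneg b) with h0 | hbpos
    · refine ⟨0, fun j => le_refl 0, ?_, ?_⟩
      · rw [Matrix.mulVec_zero, (l2norm_eq_zero_iff.mp h0.symm)]
      · rw [l2norm_zero, mul_zero]
        positivity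
    · obtain ⟨xh, h1, h2, h3⟩ := small_primal_point A b c hPfe hρP_pos
        (1.5 * l2norm b / distPri A b c)
        (by rw [div_mul_cancel₀ _ (ne_of_gt hρP_pos)]; linarith)
      refine ⟨xh, h1, h2, ?_⟩
      calc distPri A b c * l2norm xh
          ≤ distPri A b c * (1.5 * l2norm b / distPri A b c) :=
            mul_le_mul_of_nonneg_left h3 hρP_pos.le
        _ = 1.5 * l2norm b := by field_simp
  obtain ⟨u₁, hu₁f, hu₁n⟩ : ∃ u₁ : Fin m → ℝ, (∀ j, Aᵀ.mulVec u₁ j ≤ cβ j) ∧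
      distDual A bβ cβ * l2norm u₁ ≤ 1.5 * l2norm cβ := by
    rcases eq_or_lt_of_le (l2norm_nonneg cβ) with h0 | hcpos
    · refine ⟨0, fun j => ?_, ?_⟩
      · have hc0 : cβ = 0 := l2norm_eq_zero_iff.mp h0.symm
        simp [Matrix.mulVec_zero, hc0]
      · rw [l2norm_zero, mul_zero]
        positivity
    · obtain ⟨u₁, h1, h2⟩ := small_dual_point A bβ cβ hρD'_pos
        (1.5 * l2norm cβ / distDual A bβ cβ)
        (by rw [div_mul_cancel₀ _ (ne_of_gt hρD'_pos)]; linarith)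
      refine ⟨u₁, h1, ?_⟩
      calc distDual A bβ cβ * l2norm u₁
          ≤ distDual A bβ cβ * (1.5 * l2norm cβ / distDual A bβ cβ) :=
            mul_le_mul_of_nonneg_left h2 hρD'_pos.le
        _ = 1.5 * l2norm cβ := by field_simp
  obtain ⟨xh1, hxh1p, hxh1f, hxh1n⟩ : ∃ xh1 : Fin n → ℝ, (∀ j, 0 ≤ xh1 j) ∧
      A.mulVec xh1 = bβ ∧ distPri A bβ cβ * l2norm xh1 ≤ 1.5 * l2norm bβ := by
    rcases eq_or_lt_of_le (l2norm_nonneg bβ) with h0 | hbpos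
    · refine ⟨0, fun j => le_refl 0, ?_, ?_⟩
      · rw [Matrix.mulVec_zero, (l2norm_eq_zero_iff.mp h0.symm)]
      · rw [l2norm_zero, mul_zero]
        positivity
    · obtain ⟨xh1, h1, h2, h3⟩ := small_primal_point A bβ cβ ⟨xβ, hβnn, hbβ.symm⟩ hρP'_pos
        (1.5 * l2norm bβ / distPri A bβ cβ)
        (by rw [div_mul_cancel₀ _ (ne_of_gt hρP'_pos)]; linarith)
      refine ⟨xh1, h1, h2, ?_⟩
      calc distPri A bβ cβ * l2norm xh1
          ≤ distPri A bβ cβ * (1.5 * l2norm bβ / distPri A bβ cβ) :=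
            mul_le_mul_of_nonneg_left h3 hρP'_pos.le
        _ = 1.5 * l2norm bβ := by field_simp
  -- ## norm bounds for the optimal solutions (original data)
  have hv_lo : -(l2norm b * l2norm u₀) ≤ rdot b us := by
    have hA : rdot (Aᵀ.mulVec u₀) xs ≤ rdot c xs :=
      Finset.sum_le_sum fun j _ => mul_le_mul_of_nonneg_right (hu₀f j) (hppos j)
    rw [rdot_tmul, hpfeas] at hA
    have h4 := neg_rdot_le_l2 u₀ b
    rw [← hstrong]
    linarith only [hA, h4]
  have hus_b : distPri A b c * distDual A b c * l2norm us ≤ 1.5 * dnorm A b c^2 := by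
    have hL1 := dual_norm_bound A b c us (fun j => by
      have h := hdfeas j
      simp only [Pi.sub_apply] at h
      linarith)
    have hm0 : max 0 (-(rdot b us)) ≤ l2norm b * l2norm u₀ :=
      max_le (mul_nonneg (l2norm_nonneg b) (l2norm_nonneg u₀)) (by linarith only [hv_lo])
    have hL1' : distPri A b c * l2norm us ≤ max (l2norm c) (l2norm b * l2norm u₀) :=
      le_trans hL1 (max_le_max (le_refl _) hm0)
    have hcd := l2c_le_dnorm A b c
    have hbd := l2b_le_dnorm A b c
    rcases le_total (l2norm c) (l2norm b * l2norm u₀) with h | h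
    · rw [max_eq_right h] at hL1'
      have h6 := mul_le_mul_of_nonneg_left hL1' hρD_pos.le
      have h7 : l2norm b * (distDual A b c * l2norm u₀) ≤ dnorm A b c * (1.5 * l2norm c) :=
        mul_le_mul hbd hu₀n (mul_nonneg hρD_pos.le (l2norm_nonneg u₀)) hdnn
      have h8 : dnorm A b c * (1.5 * l2norm c) ≤ dnorm A b c * (1.5 * dnorm A b c) :=
        mul_le_mul_of_nonneg_left (by linarith only [hcd]) hdnn
      linarith only [h6, h7, h8]
    · rw [max_eq_left h] at hL1'
      have h6 := mul_le_mul_of_nonneg_left hL1' hρD_pos.le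
      have h7 : distDual A b c * l2norm c ≤ dnorm A b c * dnorm A b c :=
        mul_le_mul hρDd hcd (l2norm_nonneg c) hdnn
      linarith only [h6, h7, sq_nonneg (dnorm A b c)]
  have hv_hi : rdot c xs ≤ l2norm c * l2norm xh := by
    have h1 : rdot (Aᵀ.mulVec us) xh ≤ rdot c xh :=
      Finset.sum_le_sum fun j _ => mul_le_mul_of_nonneg_right
        (by have := hdfeas j; simp only [Pi.sub_apply] at this; linarith) (hxhp j)
    rw [rdot_tmul, hxhf] at h1
    have h2 := rdot_le_l2 c xh
    have h3 : rdot c xs = rdot us b := by rw [hstrong, rdot_comm]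
    linarith only [h1, h2, h3]
  have hxs_b : distPri A b c * distDual A b c * l2norm xs ≤ 1.5 * dnorm A b c^2 := by
    have hL2 := primal_norm_bound A b c xs hppos hpfeas
    have hm0 : max 0 (rdot c xs) ≤ l2norm c * l2norm xh :=
      max_le (mul_nonneg (l2norm_nonneg c) (l2norm_nonneg xh)) hv_hi
    have hL2' : distDual A b c * l2norm xs ≤ max (l2norm b) (l2norm c * l2norm xh) :=
      le_trans hL2 (max_le_max (le_refl _) hm0)
    have hcd := l2c_le_dnorm A b c
    have hbd := l2b_le_dnorm A b c
    rcases le_total (l2norm b) (l2norm c * l2norm xh) with h | h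
    · rw [max_eq_right h] at hL2'
      have h6 := mul_le_mul_of_nonneg_left hL2' hρP_pos.le
      have h7 : l2norm c * (distPri A b c * l2norm xh) ≤ dnorm A b c * (1.5 * l2norm b) :=
        mul_le_mul hcd hxhn (mul_nonneg hρP_pos.le (l2norm_nonneg xh)) hdnn
      have h8 : dnorm A b c * (1.5 * l2norm b) ≤ dnorm A b c * (1.5 * dnorm A b c) :=
        mul_le_mul_of_nonneg_left (by linarith only [hbd]) hdnn
      linarith only [h6, h7, h8]
    · rw [max_eq_left h] at hL2'
      have h6 := mul_le_mul_of_nonneg_left hL2' hρP_pos.le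
      have h7 : distPri A b c * l2norm b ≤ dnorm A b c * dnorm A b c :=
        mul_le_mul hρPd hbd (l2norm_nonneg b) hdnn
      linarith only [h6, h7, sq_nonneg (dnorm A b c)]
  -- ## norm bounds for the optimal solutions (perturbed data)
  have hvβ_lo : -(l2norm bβ * l2norm u₁) ≤ rdot bβ uβv := by
    have hA : rdot (Aᵀ.mulVec u₁) xβ ≤ rdot cβ xβ :=
      Finset.sum_le_sum fun j _ => mul_le_mul_of_nonneg_right (hu₁f j) (hβnn j)
    rw [rdot_tmul, ← hbβ] at hA
    have h4 := neg_rdot_le_l2 u₁ bβ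
    rw [← hstrongβ]
    linarith only [hA, h4]
  have huβv_b : distPri A b c * distDual A b c * l2norm uβv ≤ 3.27 * dnorm A b c^2 := by
    have hL1 := dual_norm_bound A bβ cβ uβv hdβfeas
    have hm0 : max 0 (-(rdot bβ uβv)) ≤ l2norm bβ * l2norm u₁ :=
      max_le (mul_nonneg (l2norm_nonneg bβ) (l2norm_nonneg u₁)) (by linarith only [hvβ_lo])
    have hL1' : distPri A bβ cβ * l2norm uβv ≤ max (l2norm cβ) (l2norm bβ * l2norm u₁) :=
      le_trans hL1 (max_le_max (le_refl _) hm0)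
    have hBB : distDual A bβ cβ * (distPri A bβ cβ * l2norm uβv)
        ≤ 2.126 * dnorm A b c^2 := by
      rcases le_total (l2norm cβ) (l2norm bβ * l2norm u₁) with h | h
      · rw [max_eq_right h] at hL1'
        have h6 := mul_le_mul_of_nonneg_left hL1' hρD'_pos.le
        have h7 : l2norm bβ * (distDual A bβ cβ * l2norm u₁)
            ≤ (1.2415 * dnorm A b c) * (1.5 * l2norm cβ) :=
          mul_le_mul hbβ_le hu₁n (mul_nonneg hρD'_pos.le (l2norm_nonneg u₁))
            (by positivity)
        have h8 : (1.2415 * dnorm A b c) * (1.5 * l2norm cβ)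
            ≤ (1.2415 * dnorm A b c) * (1.5 * (1.1415 * dnorm A b c)) :=
          mul_le_mul_of_nonneg_left (by linarith only [hcβ_le]) (by positivity)
        linarith only [h6, h7, h8, sq_nonneg (dnorm A b c)]
      · rw [max_eq_left h] at hL1'
        have h6 := mul_le_mul_of_nonneg_left hL1' hρD'_pos.le
        have h7 : distDual A bβ cβ * l2norm cβ
            ≤ (1.1415 * dnorm A b c) * (1.1415 * dnorm A b c) :=
          mul_le_mul hρD'_hi hcβ_le (l2norm_nonneg cβ) (by positivity)
        linarith only [h6, h7, sq_nonneg (dnorm A b c)]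
    have hLB : 0.8585 * distDual A b c * (0.7585 * distPri A b c * l2norm uβv)
        ≤ distDual A bβ cβ * (distPri A bβ cβ * l2norm uβv) := by
      apply mul_le_mul hA2
      · exact mul_le_mul_of_nonneg_right hA1 (l2norm_nonneg uβv)
      · exact mul_nonneg (mul_nonneg (by norm_num) hρP_pos.le) (l2norm_nonneg uβv)
      · exact hρD'_pos.le
    linarith only [hBB, hLB, sq_nonneg (dnorm A b c)]
  have hvβ_hi : rdot cβ xβ ≤ l2norm cβ * l2norm xh1 := by
    have h1 : rdot (Aᵀ.mulVec uβv) xh1 ≤ rdot cβ xh1 :=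
      Finset.sum_le_sum fun j _ => mul_le_mul_of_nonneg_right (hdβfeas j) (hxh1p j)
    rw [rdot_tmul, hxh1f] at h1
    have h2 := rdot_le_l2 cβ xh1
    have h3 : rdot cβ xβ = rdot uβv bβ := by rw [hstrongβ, rdot_comm]
    linarith only [h1, h2, h3]
  have hxβ_b : distPri A b c * distDual A b c * l2norm xβ ≤ 3.27 * dnorm A b c^2 := by
    have hL2 := primal_norm_bound A bβ cβ xβ hβnn hbβ.symm
    have hm0 : max 0 (rdot cβ xβ) ≤ l2norm cβ * l2norm xh1 :=
      max_le (mul_nonneg (l2norm_nonneg cβ) (l2norm_nonneg xh1)) hvβ_hi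
    have hL2' : distDual A bβ cβ * l2norm xβ ≤ max (l2norm bβ) (l2norm cβ * l2norm xh1) :=
      le_trans hL2 (max_le_max (le_refl _) hm0)
    have hBB : distPri A bβ cβ * (distDual A bβ cβ * l2norm xβ)
        ≤ 2.126 * dnorm A b c^2 := by
      rcases le_total (l2norm bβ) (l2norm cβ * l2norm xh1) with h | h
      · rw [max_eq_right h] at hL2'
        have h6 := mul_le_mul_of_nonneg_left hL2' hρP'_pos.le
        have h7 : l2norm cβ * (distPri A bβ cβ * l2norm xh1)
            ≤ (1.1415 * dnorm A b c) * (1.5 * l2norm bβ) :=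
          mul_le_mul hcβ_le hxh1n (mul_nonneg hρP'_pos.le (l2norm_nonneg xh1)) (by positivity)
        have h8 : (1.1415 * dnorm A b c) * (1.5 * l2norm bβ)
            ≤ (1.1415 * dnorm A b c) * (1.5 * (1.2415 * dnorm A b c)) :=
          mul_le_mul_of_nonneg_left (by linarith only [hbβ_le]) (by positivity)
        linarith only [h6, h7, h8, sq_nonneg (dnorm A b c)]
      · rw [max_eq_left h] at hL2'
        have h6 := mul_le_mul_of_nonneg_left hL2' hρP'_pos.le
        have h7 : distPri A bβ cβ * l2norm bβ
            ≤ (1.2415 * dnorm A b c) * (1.2415 * dnorm A b c) :=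
          mul_le_mul hρP'_hi hbβ_le (l2norm_nonneg bβ) (by positivity)
        linarith only [h6, h7, sq_nonneg (dnorm A b c)]
    have hLB : 0.7585 * distPri A b c * (0.8585 * distDual A b c * l2norm xβ)
        ≤ distPri A bβ cβ * (distDual A bβ cβ * l2norm xβ) := by
      apply mul_le_mul hA1
      · exact mul_le_mul_of_nonneg_right hA2 (l2norm_nonneg xβ)
      · exact mul_nonneg (mul_nonneg (by norm_num) hρD_pos.le) (l2norm_nonneg xβ)
      · exact hρP'_pos.le
    linarith only [hBB, hLB, sq_nonneg (dnorm A b c)]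
  -- ## final assembly
  have hβne : β ≠ 0 := ne_of_gt hβ
  have hD1 : rdot c xs - rdot cβ xβ
      ≤ l2norm us * l2norm rv + (1/β) * (l2norm sv * l2norm xβ) := by
    have h1 := neg_rdot_le_l2 us rv
    have h2 := neg_rdot_le_l2 sv xβ
    have h3 : (1/β) * (-(l2norm sv * l2norm xβ)) ≤ (1/β) * rdot sv xβ :=
      mul_le_mul_of_nonneg_left h2 (by positivity)
    linarith only [hIV, h1, h3]
  have hD2 : rdot cβ xβ - rdot c xs
      ≤ l2norm uβv * l2norm rv + (1/β) * (l2norm sv * l2norm xs) := by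
    have h1 := rdot_le_l2 uβv rv
    have h2 := rdot_le_l2 sv xs
    have h3 : (1/β) * rdot sv xs ≤ (1/β) * (l2norm sv * l2norm xs) :=
      mul_le_mul_of_nonneg_left h2 (by positivity)
    linarith only [hV, h1, h3]
  have hden_pos : (0:ℝ) < β * (distPri A b c * distDual A b c) := by positivity
  have hfinal_up : (rdot c xs - rdot cβ xβ) * (β * (distPri A b c * distDual A b c))
      ≤ 12.5 * (Cs * dnorm A b c^2) := by
    have h4 := mul_le_mul_of_nonneg_right hD1 hden_pos.le
    have e : (l2norm us * l2norm rv + (1/β) * (l2norm sv * l2norm xβ))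
        * (β * (distPri A b c * distDual A b c))
        = (β * l2norm rv) * (distPri A b c * distDual A b c * l2norm us)
          + l2norm sv * (distPri A b c * distDual A b c * l2norm xβ) := by
      field_simp
    rw [e] at h4
    have h5 : (β * l2norm rv) * (distPri A b c * distDual A b c * l2norm us)
        ≤ (2.415 * Cs) * (1.5 * dnorm A b c^2) :=
      mul_le_mul hb3' hus_b
        (mul_nonneg (mul_nonneg hρP_pos.le hρD_pos.le) (l2norm_nonneg us))
        (mul_nonneg (by norm_num) hCs_nn)
    have h6 : l2norm sv * (distPri A b c * distDual A b c * l2norm xβ)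
        ≤ (1.415 * Cs) * (3.27 * dnorm A b c^2) :=
      mul_le_mul hb4' hxβ_b
        (mul_nonneg (mul_nonneg hρP_pos.le hρD_pos.le) (l2norm_nonneg xβ))
        (mul_nonneg (by norm_num) hCs_nn)
    have h7 : 0 ≤ Cs * dnorm A b c^2 := mul_nonneg hCs_nn (sq_nonneg _)
    linarith only [h4, h5, h6, h7]
  have hfinal_lo : (rdot cβ xβ - rdot c xs) * (β * (distPri A b c * distDual A b c))
      ≤ 12.5 * (Cs * dnorm A b c^2) := by
    have h4 := mul_le_mul_of_nonneg_right hD2 hden_pos.le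
    have e : (l2norm uβv * l2norm rv + (1/β) * (l2norm sv * l2norm xs))
        * (β * (distPri A b c * distDual A b c))
        = (β * l2norm rv) * (distPri A b c * distDual A b c * l2norm uβv)
          + l2norm sv * (distPri A b c * distDual A b c * l2norm xs) := by
      field_simp
    rw [e] at h4
    have h5 : (β * l2norm rv) * (distPri A b c * distDual A b c * l2norm uβv)
        ≤ (2.415 * Cs) * (3.27 * dnorm A b c^2) :=
      mul_le_mul hb3' huβv_b
        (mul_nonneg (mul_nonneg hρP_pos.le hρD_pos.le) (l2norm_nonneg uβv))
        (mul_nonneg (by norm_num) hCs_nn)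
    have h6 : l2norm sv * (distPri A b c * distDual A b c * l2norm xs)
        ≤ (1.415 * Cs) * (1.5 * dnorm A b c^2) :=
      mul_le_mul hb4' hxs_b
        (mul_nonneg (mul_nonneg hρP_pos.le hρD_pos.le) (l2norm_nonneg xs))
        (mul_nonneg (by norm_num) hCs_nn)
    have h7 : 0 ≤ Cs * dnorm A b c^2 := mul_nonneg hCs_nn (sq_nonneg _)
    linarith only [h4, h5, h6, h7]
  have hρPne : distPri A b c ≠ 0 := ne_of_gt hρP_pos
  have hρDne : distDual A b c ≠ 0 := ne_of_gt hρD_pos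
  have hdnne : dnorm A b c ≠ 0 := ne_of_gt hdn_pos
  have hRHS_eq : (1/β) * (25 * Cs / (2 * deltaP A b c * deltaD A b c))
      = 12.5 * (Cs * dnorm A b c^2) / (β * (distPri A b c * distDual A b c)) := by
    rw [deltaP, deltaD]
    field_simp
    ring
  rw [hRHS_eq, abs_le]
  constructor
  · have h1 := (le_div_iff₀ hden_pos).mpr hfinal_lo
    linarith only [h1]
  · exact (le_div_iff₀ hden_pos).mpr hfinal_up
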